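/- arXiv:0705.2975 — 6 statements merged into one kernel-verified Lean document; each statement's English description precedes it below -/
import Mathlib

section
/- Let K be a difference field of characteristic zero with field of constants C, and let A ∈ GL_n(K). Let S = K[U, 1/det(U)], with U ∈ GL_n(S) and σ(U) = AU, be a Picard-Vessiot ring for σ(X) = AX over K with C_S = C, and let L = K(V), with V ∈ GL_n(L) and σ(V) = AV, be a weak Picard-Vessiot field for σ(X) = AX over K. Let C̄ be an algebraic closure of C with trivial σ-action and set T = K[V, 1/det(V)] ⊆ L. Then S ⊗_C C̄ and T ⊗_C C̄ are isomorphic as difference rings; more precisely, any injective difference K-algebra homomorphism ρ : S → L ⊗_C C̄ as in the embedding theorem maps S ⊗_C C̄ isomorphically onto T ⊗_C C̄. -/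
open scoped TensorProduct

noncomputable section

namespace PV

set_option synthInstance.maxHeartbeats 1000000
set_option maxHeartbeats 4000000

/-! Basic difference-algebra vocabulary -/

theorem iter_mul {R : Type*} [Ring R] (σ : R ≃+* R) :
    ∀ (m : ℕ) (a b : R), (⇑σ)^[m] (a * b) = (⇑σ)^[m] a * (⇑σ)^[m] b := by
  intro m
  induction m with
  | zero => intro a b; rfl
  | succ k ih =>
    intro a b
    simp only [Function.iterate_succ_apply, map_mul]
    exact ih _ _

theorem iter_add {R : Type*} [Ring R] (σ : R ≃+* R) :
    ∀ (m : ℕ) (a b : R), (⇑σ)^[m] (a + b) = (⇑σ)^[m] a + (⇑σ)^[m] b := by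
  intro m
  induction m with
  | zero => intro a b; rfl
  | succ k ih =>
    intro a b
    simp only [Function.iterate_succ_apply, map_add]
    exact ih _ _

theorem iter_neg {R : Type*} [Ring R] (σ : R ≃+* R) :
    ∀ (m : ℕ) (a : R), (⇑σ)^[m] (-a) = -((⇑σ)^[m] a) := by
  intro m
  induction m with
  | zero => intro a; rfl
  | succ k ih =>
    intro a
    simp only [Function.iterate_succ_apply, map_neg]
    exact ih _

theorem iter_inv {K : Type*} [Field K] (σ : K ≃+* K) :
    ∀ (m : ℕ) (a : K), (⇑σ)^[m] a⁻¹ = ((⇑σ)^[m] a)⁻¹ := by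
  intro m
  induction m with
  | zero => intro a; rfl
  | succ k ih =>
    intro a
    simp only [Function.iterate_succ_apply, map_inv₀]
    exact ih _

/-- The subring of constants of a difference ring. -/
def constants {R : Type*} [Ring R] (σ : R ≃+* R) : Subring R where
  carrier := {r | σ r = r}
  one_mem' := map_one σ
  mul_mem' := fun {a b} ha hb => by
    simp only [Set.mem_setOf_eq] at *
    rw [map_mul, ha, hb]
  add_mem' := fun {a b} ha hb => by
    simp only [Set.mem_setOf_eq] at *
    rw [map_add, ha, hb]
  zero_mem' := map_zero σ
  neg_mem' := fun {a} ha => by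
    simp only [Set.mem_setOf_eq] at *
    rw [map_neg, ha]

/-- The subfield of constants of a difference field. -/
def constantsF {K : Type*} [Field K] (σ : K ≃+* K) : Subfield K :=
  { constants σ with
    inv_mem' := fun a ha => by
      show σ a⁻¹ = a⁻¹
      rw [map_inv₀]
      exact congrArg Inv.inv ha }

/-- The subring `D_R` of elements fixed by some positive power of `σ`. -/
def periodic {R : Type*} [Ring R] (σ : R ≃+* R) : Subring R where
  carrier := {a | ∃ m, 0 < m ∧ (⇑σ)^[m] a = a}
  one_mem' := ⟨1, one_pos, by simp⟩
  zero_mem' := ⟨1, one_pos, by simp⟩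
  mul_mem' := fun {a b} ha hb => by
    obtain ⟨m, hm, ha⟩ := ha
    obtain ⟨m', hm', hb⟩ := hb
    refine ⟨m * m', Nat.mul_pos hm hm', ?_⟩
    rw [iter_mul]
    have h1 : (⇑σ)^[m * m'] a = a := by
      rw [Function.iterate_mul]; exact Function.iterate_fixed ha m'
    have h2 : (⇑σ)^[m * m'] b = b := by
      rw [mul_comm, Function.iterate_mul]; exact Function.iterate_fixed hb m
    rw [h1, h2]
  add_mem' := fun {a b} ha hb => by
    obtain ⟨m, hm, ha⟩ := ha
    obtain ⟨m', hm', hb⟩ := hb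
    refine ⟨m * m', Nat.mul_pos hm hm', ?_⟩
    rw [iter_add]
    have h1 : (⇑σ)^[m * m'] a = a := by
      rw [Function.iterate_mul]; exact Function.iterate_fixed ha m'
    have h2 : (⇑σ)^[m * m'] b = b := by
      rw [mul_comm, Function.iterate_mul]; exact Function.iterate_fixed hb m
    rw [h1, h2]
  neg_mem' := fun {a} ha => by
    obtain ⟨m, hm, ha⟩ := ha
    exact ⟨m, hm, by rw [iter_neg, ha]⟩

/-- The subfield `D_L` of a difference field: elements fixed by some positive power of `σ`. -/
def periodicF {K : Type*} [Field K] (σ : K ≃+* K) : Subfield K :=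
  { periodic σ with
    inv_mem' := fun a ha => by
      obtain ⟨m, hm, ha⟩ := ha
      exact ⟨m, hm, by rw [iter_inv, ha]⟩ }

/-- The degree `[F : E]` of nested subfields of a field. -/
def subdeg {X : Type*} [Field X] (E F : Subfield X) (h : E ≤ F) : ℕ :=
  letI : Algebra E F := (Subfield.inclusion h).toAlgebra
  Module.finrank E F

/-- `F` is a finite extension of the subfield `E` (both subfields of a common field). -/
def SubfieldFinite {X : Type*} [Field X] (E F : Subfield X) : Prop :=
  ∃ h : E ≤ F,
    letI : Algebra E F := (Subfield.inclusion h).toAlgebra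
    Module.Finite E F

/-- `σR` extends `σk` along `algebraMap k R`. -/
def DiffCompat {k R : Type*} [CommRing k] [CommRing R] [Algebra k R]
    (σk : k ≃+* k) (σR : R ≃+* R) : Prop :=
  ∀ x : k, σR (algebraMap k R x) = algebraMap k R (σk x)

/-- the constants of `R` are (the image of) the constants of `k`: `C_R = C_k`. -/
def ConstantsMatch {k R : Type*} [CommRing k] [CommRing R] [Algebra k R]
    (σk : k ≃+* k) (σR : R ≃+* R) : Prop :=
  ∀ r : R, σR r = r → ∃ c : k, σk c = c ∧ algebraMap k R c = r

/-- A difference ring is simple if its only σ-invariant ideals are `⊥` and `⊤`. -/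
def IsSimpleDiff {R : Type*} [CommRing R] (σ : R ≃+* R) : Prop :=
  ∀ I : Ideal R, (∀ x ∈ I, σ x ∈ I) → I = ⊥ ∨ I = ⊤

/-- The set of entries of a square matrix. -/
def entries {R : Type*} {n : ℕ} (M : Matrix (Fin n) (Fin n) R) : Set R :=
  Set.range fun p : Fin n × Fin n => M p.1 p.2

/-- `Z` is a fundamental solution matrix for `σ(X) = A X`:  `σ Z = A Z` entrywise. -/
def FundMatrix {k R : Type*} {n : ℕ} [CommRing k] [CommRing R] [Algebra k R]
    (σR : R ≃+* R) (A : (Matrix (Fin n) (Fin n) k)ˣ) (Z : (Matrix (Fin n) (Fin n) R)ˣ) : Prop :=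
  Z.val.map ⇑σR = A.val.map (algebraMap k R) * Z.val

/-- `R` is a Picard-Vessiot ring for `σ(X) = A X` over `k`. -/
def IsPVRing {k R : Type*} {n : ℕ} [CommRing k] [CommRing R] [Algebra k R]
    (σk : k ≃+* k) (σR : R ≃+* R) (A : (Matrix (Fin n) (Fin n) k)ˣ) : Prop :=
  DiffCompat σk σR ∧ IsSimpleDiff σR ∧
    ∃ Z : (Matrix (Fin n) (Fin n) R)ˣ, FundMatrix σR A Z ∧
      Algebra.adjoin k (entries Z.val ∪ entries (↑Z⁻¹ : Matrix (Fin n) (Fin n) R)) = ⊤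

/-- `R` is a weak Picard-Vessiot ring for `σ(X) = A X` over `k`. -/
def IsWeakPVRing {k R : Type*} {n : ℕ} [CommRing k] [CommRing R] [Algebra k R]
    (σk : k ≃+* k) (σR : R ≃+* R) (A : (Matrix (Fin n) (Fin n) k)ˣ) : Prop :=
  DiffCompat σk σR ∧ ConstantsMatch σk σR ∧
    ∃ Z : (Matrix (Fin n) (Fin n) R)ˣ, FundMatrix σR A Z ∧
      Algebra.adjoin k (entries Z.val ∪ entries (↑Z⁻¹ : Matrix (Fin n) (Fin n) R)) = ⊤

/-! The generic difference ring `k[Y, 1/det Y]` -/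

/-- The generic `n × n` matrix with polynomial indeterminate entries. -/
def genMat (k : Type*) [CommRing k] (n : ℕ) :
    Matrix (Fin n) (Fin n) (MvPolynomial (Fin n × Fin n) k) :=
  Matrix.of fun i j => MvPolynomial.X (i, j)

/-- The generic ring `k[Y_{ij}, 1/det Y]`. -/
abbrev GenRing (k : Type*) [CommRing k] (n : ℕ) : Type _ :=
  Localization.Away (genMat k n).det

/-- The images of the indeterminates `Y_{ij}` in the generic ring. -/
def Yent (k : Type*) [CommRing k] (n : ℕ) (i j : Fin n) : GenRing k n :=
  algebraMap (MvPolynomial (Fin n × Fin n) k) (GenRing k n) (genMat k n i j)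

/-- The inverse of `det Y` in the generic ring. -/
def invDet (k : Type*) [CommRing k] (n : ℕ) : GenRing k n :=
  IsLocalization.Away.invSelf (genMat k n).det

/-- The transcendence degree of `L` over `F` equals `d`. -/
def TrdegEq (F L : Type*) [Field F] [Field L] [Algebra F L] (d : ℕ) : Prop :=
  ∃ s : Finset L, s.card = d ∧
    AlgebraicIndependent F (Subtype.val : ((s : Set L)) → L) ∧
    Algebra.IsAlgebraic (IntermediateField.adjoin F (s : Set L)) L

/-! decompositions into primitive idempotents and the `m`-invariant -/

/-- `e` lists the primitive idempotents of a difference ring, permuted cyclically by `σ`. -/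
def IsDecomp {R' : Type*} [CommRing R'] (σ' : R' ≃+* R') {ℓ : ℕ} (e : Fin ℓ → R') : Prop :=
  (∀ i, IsIdempotentElem (e i)) ∧
  (Pairwise fun i j => e i * e j = 0) ∧
  (∑ i, e i) = 1 ∧
  (∀ i, e i ≠ 0 ∧ ∀ f : R', IsIdempotentElem f → f * e i = f → f = 0 ∨ f = e i) ∧
  (∀ i : Fin ℓ, σ' (e i) = e ⟨(i.1 + 1) % ℓ, Nat.mod_lt _ (Nat.zero_lt_of_lt i.isLt)⟩)

/-- The `m`-invariant of a Picard-Vessiot ring `R'` over `K` equals `m`: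
`m = ℓ(R') * [D_{R₀*} : D_K · C_{R₀*}]`, where `R₀` is the quotient of `R'` by the ideal
generated by `1 - e₀`, and `R₀*` is its fraction field carrying the automorphism induced
by `σ'^ℓ`. -/
def HasMInvariant {K R' : Type*} [Field K] [CommRing R'] [Algebra K R']
    (σK : K ≃+* K) (σ' : R' ≃+* R') (m : ℕ) : Prop :=
  ∃ (ℓ : ℕ) (hℓ : 0 < ℓ) (e : Fin ℓ → R'), IsDecomp σ' e ∧
    ∀ (hdom : IsDomain (R' ⧸ Ideal.span {1 - e ⟨0, hℓ⟩})),
      letI : IsDomain (R' ⧸ Ideal.span {1 - e ⟨0, hℓ⟩}) := hdom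
      ∀ (σQ : FractionRing (R' ⧸ Ideal.span {1 - e ⟨0, hℓ⟩}) ≃+*
              FractionRing (R' ⧸ Ideal.span {1 - e ⟨0, hℓ⟩})),
        (∀ x : R',
            σQ (algebraMap (R' ⧸ Ideal.span {1 - e ⟨0, hℓ⟩})
                  (FractionRing (R' ⧸ Ideal.span {1 - e ⟨0, hℓ⟩}))
                  (Ideal.Quotient.mk (Ideal.span {1 - e ⟨0, hℓ⟩}) x)) =
            algebraMap (R' ⧸ Ideal.span {1 - e ⟨0, hℓ⟩})
                  (FractionRing (R' ⧸ Ideal.span {1 - e ⟨0, hℓ⟩}))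
                  (Ideal.Quotient.mk (Ideal.span {1 - e ⟨0, hℓ⟩}) ((⇑σ')^[ℓ] x))) →
        ∃ h : Subfield.closure
              ((⇑((algebraMap (R' ⧸ Ideal.span {1 - e ⟨0, hℓ⟩})
                    (FractionRing (R' ⧸ Ideal.span {1 - e ⟨0, hℓ⟩}))).comp
                  ((Ideal.Quotient.mk (Ideal.span {1 - e ⟨0, hℓ⟩})).comp (algebraMap K R'))) ''
                 {a : K | ∃ m', 0 < m' ∧ (⇑σK)^[m'] a = a}) ∪
               (constantsF σQ : Set (FractionRing (R' ⧸ Ideal.span {1 - e ⟨0, hℓ⟩})))) ≤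
              periodicF σQ,
          m = ℓ * subdeg _ _ h



/-! Auxiliary lemmas for statement 3 -/

lemma matmap_mul {R S : Type*} [CommRing R] [CommRing S] {n : ℕ} {F : Type*}
    [FunLike F R S] [RingHomClass F R S] (f : F) (M N : Matrix (Fin n) (Fin n) R) :
    (M * N).map ⇑f = M.map ⇑f * N.map ⇑f := by
  ext i j
  simp [Matrix.map_apply, Matrix.mul_apply, map_sum]

lemma matmap_one {R S : Type*} [CommRing R] [CommRing S] {n : ℕ} {F : Type*}
    [FunLike F R S] [RingHomClass F R S] (f : F) :
    (1 : Matrix (Fin n) (Fin n) R).map ⇑f = 1 :=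
  Matrix.map_one _ (map_zero f) (map_one f)

lemma matmap_mul_eq_one {R S : Type*} [CommRing R] [CommRing S] {n : ℕ} {F : Type*}
    [FunLike F R S] [RingHomClass F R S] (f : F) {M N : Matrix (Fin n) (Fin n) R}
    (h : M * N = 1) : M.map ⇑f * N.map ⇑f = 1 := by
  rw [← matmap_mul, h, matmap_one]

lemma matmap_congr {R S : Type*} {n : ℕ} (M : Matrix (Fin n) (Fin n) R) {f g : R → S}
    (h : ∀ x, f x = g x) : M.map f = M.map g := by
  ext i j
  simp only [Matrix.map_apply, h]

lemma mat_inv_unique {R : Type*} [CommRing R] {n : ℕ} {P X Y : Matrix (Fin n) (Fin n) R}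
    (h1 : P * X = 1) (h2 : Y * P = 1) : X = Y := by
  rw [← one_mul X, ← h2, Matrix.mul_assoc, h1, Matrix.mul_one]

lemma repr_sigma {C A Cb : Type} [Field C] [CommRing A] [Field Cb]
    [Algebra C A] [Algebra C Cb]
    (σA : A ≃+* A) (σ₂ : A ⊗[C] Cb ≃+* A ⊗[C] Cb)
    (hσ₂ : ∀ (v : A) (c : Cb), σ₂ (v ⊗ₜ[C] c) = σA v ⊗ₜ[C] c)
    (hfix : ∀ c : C, σA (algebraMap C A c) = algebraMap C A c)
    (b : Module.Basis (Module.Basis.ofVectorSpaceIndex C Cb) C Cb)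
    (y : A ⊗[C] Cb) (i : Module.Basis.ofVectorSpaceIndex C Cb) :
    (b.baseChange A).repr (σ₂ y) i = σA ((b.baseChange A).repr y i) := by
  induction y using TensorProduct.induction_on with
  | zero => simp
  | tmul v c =>
    rw [hσ₂, Module.Basis.baseChange_repr_tmul, Module.Basis.baseChange_repr_tmul,
      Algebra.smul_def, Algebra.smul_def, map_mul, hfix]
  | add u v hu hv =>
    simp only [map_add, Finsupp.add_apply, hu, hv]

lemma constant_is_tmul {C A Cb : Type} [Field C] [CommRing A] [Field Cb]
    [Algebra C A] [Algebra C Cb]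
    (σA : A ≃+* A) (σ₂ : A ⊗[C] Cb ≃+* A ⊗[C] Cb)
    (hσ₂ : ∀ (v : A) (c : Cb), σ₂ (v ⊗ₜ[C] c) = σA v ⊗ₜ[C] c)
    (hfix : ∀ c : C, σA (algebraMap C A c) = algebraMap C A c)
    (hconst : ∀ v : A, σA v = v → ∃ c : C, algebraMap C A c = v)
    (x : A ⊗[C] Cb) (hx : σ₂ x = x) : ∃ c : Cb, x = 1 ⊗ₜ[C] c := by
  classical
  set b : Module.Basis (Module.Basis.ofVectorSpaceIndex C Cb) C Cb := Module.Basis.ofVectorSpace C Cb with hb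
  set B := b.baseChange A with hB
  have hmem : x ∈ (Algebra.TensorProduct.includeRight : Cb →ₐ[C] A ⊗[C] Cb).range := by
    have hx2 : x = ((B.repr x).support).sum fun i => (B.repr x i) • B i := by
      conv_lhs => rw [← B.linearCombination_repr x]
      rw [Finsupp.linearCombination_apply, Finsupp.sum]
    rw [hx2]
    refine Subalgebra.sum_mem _ fun i _ => ?_
    have hfixi : σA (B.repr x i) = B.repr x i := by
      conv_rhs => rw [← hx]
      exact (repr_sigma σA σ₂ hσ₂ hfix b x i).symm
    obtain ⟨c, hc⟩ := hconst _ hfixi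
    rw [← hc, algebraMap_smul A c (B i)]
    refine Subalgebra.smul_mem _ ?_ c
    rw [hB, Module.Basis.baseChange_apply]
    exact ⟨b i, rfl⟩
  obtain ⟨c, hc⟩ := hmem
  exact ⟨c, hc.symm⟩

lemma tensor_simple {C A Cb : Type} [Field C] [CommRing A] [Nontrivial A] [Field Cb]
    [Algebra C A] [Algebra C Cb]
    (σA : A ≃+* A) (σ₂ : A ⊗[C] Cb ≃+* A ⊗[C] Cb)
    (hσ₂ : ∀ (v : A) (c : Cb), σ₂ (v ⊗ₜ[C] c) = σA v ⊗ₜ[C] c)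
    (hfix : ∀ c : C, σA (algebraMap C A c) = algebraMap C A c)
    (hconst : ∀ v : A, σA v = v → ∃ c : C, algebraMap C A c = v)
    (hsimple : ∀ J : Ideal A, (∀ x ∈ J, σA x ∈ J) → J = ⊥ ∨ J = ⊤) :
    ∀ I : Ideal (A ⊗[C] Cb), (∀ x ∈ I, σ₂ x ∈ I) → I = ⊥ ∨ I = ⊤ := by
  classical
  intro I hI
  by_cases hbot : I = ⊥
  · exact Or.inl hbot
  right
  obtain ⟨x0, hx0I, hx00⟩ := Submodule.exists_mem_ne_zero_of_ne_bot hbot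
  set b : Module.Basis (Module.Basis.ofVectorSpaceIndex C Cb) C Cb := Module.Basis.ofVectorSpace C Cb with hb
  set B := b.baseChange A with hB
  set Sset : Set ℕ := {m | ∃ w, w ∈ I ∧ w ≠ 0 ∧ (B.repr w).support.card = m} with hSset
  have hne : Sset.Nonempty := ⟨_, x0, hx0I, hx00, rfl⟩
  obtain ⟨x, hxI, hx0, hcard⟩ := Nat.sInf_mem hne
  set m₀ := sInf Sset with hm₀
  have hreprx : B.repr x ≠ 0 := fun h => hx0 (by
    have := congrArg B.repr.symm h
    rwa [B.repr.symm_apply_apply, map_zero] at this)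
  obtain ⟨i₀, hi₀⟩ := Finsupp.support_nonempty_iff.mpr hreprx
  set s₁ := B.repr x i₀ with hs₁def
  have hs₁ : s₁ ≠ 0 := Finsupp.mem_support_iff.mp hi₀
  set g : ℕ → A := fun k => (⇑σA)^[k] s₁ with hg
  set J : Ideal A := Ideal.span (Set.range g) with hJ
  have hJσ : ∀ w ∈ J, σA w ∈ J := by
    intro w hw
    have hle : J ≤ Ideal.comap (σA : A →+* A) J := by
      rw [hJ, Ideal.span_le]
      rintro _ ⟨k, rfl⟩
      rw [SetLike.mem_coe, Ideal.mem_comap]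
      have : σA (g k) = g (k + 1) := by
        rw [hg]; simp only []; rw [Function.iterate_succ_apply']
      rw [RingEquiv.coe_toRingHom, this]
      exact Ideal.subset_span ⟨k + 1, rfl⟩
    exact Ideal.mem_comap.mp (hle hw)
  have hJtop : J = ⊤ := by
    rcases hsimple J hJσ with h | h
    · exfalso
      have : s₁ ∈ J := Ideal.subset_span ⟨0, rfl⟩
      rw [h, Ideal.mem_bot] at this
      exact hs₁ this
    · exact h
  have h1J : (1 : A) ∈ Ideal.span (Set.range g) := by rw [← hJ, hJtop]; trivial
  rw [Ideal.span, Submodule.mem_span_set] at h1J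
  obtain ⟨cf, hcfsupp, hcfsum⟩ := h1J
  have hiter : ∀ k, (⇑σ₂)^[k] x ∈ I := by
    intro k
    induction k with
    | zero => exact hxI
    | succ k ih => rw [Function.iterate_succ_apply']; exact hI _ ih
  have hiterrepr : ∀ (k : ℕ) (i), B.repr ((⇑σ₂)^[k] x) i = (⇑σA)^[k] (B.repr x i) := by
    intro k
    induction k with
    | zero => intro i; rfl
    | succ k ih =>
      intro i
      rw [Function.iterate_succ_apply', Function.iterate_succ_apply',
        repr_sigma σA σ₂ hσ₂ hfix b, ih]
  set F : A → A ⊗[C] Cb := fun z =>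
    if h : z ∈ Set.range g then (⇑σ₂)^[h.choose] x else 0 with hF
  have hFI : ∀ z, F z ∈ I := by
    intro z
    by_cases h : z ∈ Set.range g
    · simp only [hF, dif_pos h]; exact hiter _
    · simp only [hF, dif_neg h]; exact I.zero_mem
  have hFrepr : ∀ z, ∀ hz : z ∈ Set.range g, ∀ i,
      B.repr (F z) i = (⇑σA)^[hz.choose] (B.repr x i) := by
    intro z hz i
    simp only [hF, dif_pos hz]
    exact hiterrepr _ i
  set y : A ⊗[C] Cb := cf.sum fun z r => r • F z with hy
  have hysum : y = ∑ z ∈ cf.support, cf z • F z := rfl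
  have hyI : y ∈ I := by
    rw [hysum]
    refine Submodule.sum_mem I fun z _ => ?_
    rw [Algebra.smul_def]
    exact I.mul_mem_left _ (hFI z)
  have hyrepr : ∀ i, B.repr y i = ∑ z ∈ cf.support, cf z * B.repr (F z) i := by
    intro i
    rw [hysum, map_sum, Finsupp.finset_sum_apply]
    refine Finset.sum_congr rfl fun z _ => ?_
    rw [map_smul, Finsupp.smul_apply, smul_eq_mul]
  have hyi₀ : B.repr y i₀ = 1 := by
    rw [hyrepr]
    have : ∀ z ∈ cf.support, cf z * B.repr (F z) i₀ = cf z * z := by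
      intro z hzmem
      have hz : z ∈ Set.range g := hcfsupp hzmem
      rw [hFrepr z hz i₀]
      congr 1
      exact hz.choose_spec
    rw [Finset.sum_congr rfl this]
    rw [← hcfsum, Finsupp.sum]
    refine Finset.sum_congr rfl fun z _ => ?_
    rw [smul_eq_mul]
  have hy0 : y ≠ 0 := by
    intro h
    rw [h, map_zero] at hyi₀
    exact (one_ne_zero : (1:A) ≠ 0) hyi₀.symm
  have hsuppy : (B.repr y).support ⊆ (B.repr x).support := by
    intro i hi
    rw [Finsupp.mem_support_iff] at hi ⊢
    intro hxi
    refine hi ?_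
    rw [hyrepr]
    refine Finset.sum_eq_zero fun z hzmem => ?_
    have hz : z ∈ Set.range g := hcfsupp hzmem
    rw [hFrepr z hz i, hxi]
    rw [Function.iterate_fixed (map_zero σA), mul_zero]
  have hym : (B.repr y).support.card = m₀ := by
    have h1 : m₀ ≤ (B.repr y).support.card := Nat.sInf_le ⟨y, hyI, hy0, rfl⟩
    have h2 : (B.repr y).support.card ≤ m₀ := hcard ▸ Finset.card_le_card hsuppy
    omega
  have hsuppeq : (B.repr y).support = (B.repr x).support :=
    Finset.eq_of_subset_of_card_le hsuppy (by omega)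
  set z' := σ₂ y - y with hz'
  have hz'I : z' ∈ I := sub_mem (hI y hyI) hyI
  have hz'repr : ∀ i, B.repr z' i = σA (B.repr y i) - B.repr y i := by
    intro i
    rw [hz', map_sub, Finsupp.sub_apply, repr_sigma σA σ₂ hσ₂ hfix b]
  have hz'i₀ : B.repr z' i₀ = 0 := by
    rw [hz'repr, hyi₀, map_one, sub_self]
  have hsuppz' : (B.repr z').support ⊆ (B.repr x).support.erase i₀ := by
    intro i hi
    rw [Finsupp.mem_support_iff] at hi
    rw [Finset.mem_erase]
    constructor
    · intro h; exact hi (h ▸ hz'i₀)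
    · by_contra h
      rw [← hsuppeq, Finsupp.notMem_support_iff] at h
      exact hi (by rw [hz'repr, h, map_zero, sub_zero])
  have hz'0 : z' = 0 := by
    by_contra h
    have h1 : m₀ ≤ (B.repr z').support.card := Nat.sInf_le ⟨z', hz'I, h, rfl⟩
    have h2 : (B.repr z').support.card ≤ ((B.repr x).support.erase i₀).card :=
      Finset.card_le_card hsuppz'
    have h3 : ((B.repr x).support.erase i₀).card < (B.repr x).support.card :=
      Finset.card_erase_lt_of_mem hi₀
    omega
  have hyfix : σ₂ y = y := by rwa [hz', sub_eq_zero] at hz'0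
  obtain ⟨c, hc⟩ := constant_is_tmul σA σ₂ hσ₂ hfix hconst y hyfix
  have hc0 : c ≠ 0 := by
    intro h
    rw [h, TensorProduct.tmul_zero] at hc
    exact hy0 hc
  have hyunit : IsUnit y := by
    refine IsUnit.of_mul_eq_one (a := y) ((1:A) ⊗ₜ[C] c⁻¹) ?_
    rw [hc, Algebra.TensorProduct.tmul_mul_tmul, one_mul, mul_inv_cancel₀ hc0]
    rfl
  exact I.eq_top_of_isUnit_mem hyI hyunit

/-- Any injective difference `K`-algebra embedding `ρ : S → L ⊗_C C̄` of the
Picard-Vessiot ring `S` maps `S ⊗_C C̄` isomorphically (as difference rings) onto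
`T ⊗_C C̄`, where `T = K[V, 1/det V] ⊆ L`. -/
theorem statement_3 {K : Type} [Field K] [CharZero K] (σK : K ≃+* K)
    {C : Type} [Field C] [Algebra C K]
    (hC : ∀ x : K, σK x = x ↔ x ∈ (algebraMap C K).range)
    {n : ℕ} (A : (Matrix (Fin n) (Fin n) K)ˣ)
    -- the Picard-Vessiot ring S = K[U, 1/det U] with C_S = C
    {S : Type} [CommRing S] [Algebra K S] (σS : S ≃+* S)
    (U : (Matrix (Fin n) (Fin n) S)ˣ) (hU : FundMatrix σS A U)
    (hSgen : Algebra.adjoin K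
      (entries U.val ∪ entries (↑U⁻¹ : Matrix (Fin n) (Fin n) S)) = ⊤)
    (hSPV : IsPVRing σK σS A) (hSconst : ConstantsMatch σK σS)
    -- the weak Picard-Vessiot field L = K(V)
    {L : Type} [Field L] [Algebra K L] (σL : L ≃+* L)
    (hKL : DiffCompat σK σL) (hLconst : ConstantsMatch σK σL)
    (V : (Matrix (Fin n) (Fin n) L)ˣ) (hV : FundMatrix σL A V)
    (hLgen : IntermediateField.adjoin K (entries V.val) = ⊤)
    -- the algebraic closure C̄ of C, with trivial σ-action
    {Cb : Type} [Field Cb] [Algebra C Cb] [IsAlgClosure C Cb]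
    [Algebra C L] [IsScalarTower C K L] [Algebra C S] [IsScalarTower C K S]
    -- σ on L ⊗_C C̄ and the embedding ρ as in the embedding theorem
    (σ₂ : L ⊗[C] Cb ≃+* L ⊗[C] Cb)
    (hσ₂ : ∀ (v : L) (c : Cb), σ₂ (v ⊗ₜ[C] c) = σL v ⊗ₜ[C] c)
    (ρ : S →ₐ[K] L ⊗[C] Cb) (hρinj : Function.Injective ρ)
    (hρσ : ∀ s, ρ (σS s) = σ₂ (ρ s)) :
    -- T = K[V, 1/det V], a difference subring of L
    ∃ σT : (Algebra.adjoin K (entries V.val ∪ entries (↑V⁻¹ : Matrix (Fin n) (Fin n) L))) ≃+*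
           (Algebra.adjoin K (entries V.val ∪ entries (↑V⁻¹ : Matrix (Fin n) (Fin n) L))),
      (∀ t : (Algebra.adjoin K (entries V.val ∪ entries (↑V⁻¹ : Matrix (Fin n) (Fin n) L))),
        (σT t : L) = σL ↑t) ∧
      -- ρ induces an isomorphism of difference rings S ⊗_C C̄ ≅ T ⊗_C C̄
      ∃ (σS' : S ⊗[C] Cb ≃+* S ⊗[C] Cb)
        (σT' : (Algebra.adjoin K (entries V.val ∪ entries (↑V⁻¹ : Matrix (Fin n) (Fin n) L)))
                 ⊗[C] Cb ≃+*
               (Algebra.adjoin K (entries V.val ∪ entries (↑V⁻¹ : Matrix (Fin n) (Fin n) L)))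
                 ⊗[C] Cb)
        (E : S ⊗[C] Cb ≃+*
             (Algebra.adjoin K (entries V.val ∪ entries (↑V⁻¹ : Matrix (Fin n) (Fin n) L)))
               ⊗[C] Cb),
        (∀ (s : S) (c : Cb), σS' (s ⊗ₜ[C] c) = σS s ⊗ₜ[C] c) ∧
        (∀ (t : (Algebra.adjoin K (entries V.val ∪ entries (↑V⁻¹ : Matrix (Fin n) (Fin n) L))))
           (c : Cb), σT' (t ⊗ₜ[C] c) = σT t ⊗ₜ[C] c) ∧
        (∀ x, E (σS' x) = σT' (E x)) ∧
        -- E is induced by ρ: composing with the inclusion T ⊗ C̄ → L ⊗ C̄ recovers ρ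
        (∀ (s : S) (c : Cb),
          (Algebra.TensorProduct.map
            ((Algebra.adjoin K (entries V.val ∪
                entries (↑V⁻¹ : Matrix (Fin n) (Fin n) L))).val.restrictScalars C)
            (AlgHom.id C Cb)) (E (s ⊗ₜ[C] c)) = ρ s * ((1 : L) ⊗ₜ[C] c)) := by
  classical
  obtain ⟨hKS, hSsimple, -⟩ := hSPV
  -- basic facts about constants
  have hfixK : ∀ c : C, σK (algebraMap C K c) = algebraMap C K c :=
    fun c => (hC _).mpr ⟨c, rfl⟩
  have hfixL : ∀ c : C, σL (algebraMap C L c) = algebraMap C L c := by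
    intro c
    rw [IsScalarTower.algebraMap_apply C K L, hKL, hfixK]
  have hfixS : ∀ c : C, σS (algebraMap C S c) = algebraMap C S c := by
    intro c
    rw [IsScalarTower.algebraMap_apply C K S, hKS, hfixK]
  have hconstL : ∀ v : L, σL v = v → ∃ c : C, algebraMap C L c = v := by
    intro v hv
    obtain ⟨k, hk, hkv⟩ := hLconst v hv
    obtain ⟨c, hc⟩ := (hC k).mp hk
    exact ⟨c, by rw [IsScalarTower.algebraMap_apply C K L, hc, hkv]⟩
  have hconstS : ∀ v : S, σS v = v → ∃ c : C, algebraMap C S c = v := by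
    intro v hv
    obtain ⟨k, hk, hkv⟩ := hSconst v hv
    obtain ⟨c, hc⟩ := (hC k).mp hk
    exact ⟨c, by rw [IsScalarTower.algebraMap_apply C K S, hc, hkv]⟩
  -- matrices over L
  set Vv := V.val with hVvdef
  set Vi := (↑V⁻¹ : Matrix (Fin n) (Fin n) L) with hVidef
  have hVVi : Vv * Vi = 1 := V.mul_inv
  have hViV : Vi * Vv = 1 := V.inv_mul
  set AL := A.val.map (algebraMap K L) with hALdef
  set ALi := (↑A⁻¹ : Matrix (Fin n) (Fin n) K).map (algebraMap K L) with hALidef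
  have hALmul : AL * ALi = 1 := matmap_mul_eq_one _ A.mul_inv
  have hALmul' : ALi * AL = 1 := matmap_mul_eq_one _ A.inv_mul
  have hVσ : Vv.map ⇑σL = AL * Vv := hV
  have hViσ : Vi.map ⇑σL = Vi * ALi := by
    refine mat_inv_unique (P := Vv.map ⇑σL) ?_ ?_
    · exact matmap_mul_eq_one σL hVVi
    · rw [hVσ, ← Matrix.mul_assoc, Matrix.mul_assoc Vi ALi AL, hALmul', Matrix.mul_one, hViV]
  set P' := AL.map ⇑σL.symm with hP'
  set Q' := ALi.map ⇑σL.symm with hQ'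
  have hPQ : P' * Q' = 1 := matmap_mul_eq_one σL.symm hALmul
  have hQP : Q' * P' = 1 := matmap_mul_eq_one σL.symm hALmul'
  have hVback : P' * (Vv.map ⇑σL.symm) = Vv := by
    have h0 := congrArg (fun M => M.map ⇑σL.symm) hVσ
    simp only [matmap_mul σL.symm, Matrix.map_map] at h0
    have h2 : Vv.map (⇑σL.symm ∘ ⇑σL) = Vv := by
      have he : (⇑σL.symm ∘ ⇑σL) = id := funext fun x => σL.symm_apply_apply x
      rw [he, Matrix.map_id]
    rw [h2] at h0
    rw [hP']
    exact h0.symm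
  have hVσsymm : Vv.map ⇑σL.symm = Q' * Vv := by
    conv_rhs => rw [← hVback]
    rw [← Matrix.mul_assoc, hQP, Matrix.one_mul]
  have hViσsymm : Vi.map ⇑σL.symm = Vi * P' := by
    refine mat_inv_unique (P := Vv.map ⇑σL.symm) ?_ ?_
    · exact matmap_mul_eq_one σL.symm hVVi
    · rw [hVσsymm, ← Matrix.mul_assoc, Matrix.mul_assoc Vi P' Q', hPQ, Matrix.mul_one, hViV]
  -- the subalgebra T
  set Talg := Algebra.adjoin K (entries Vv ∪ entries Vi) with hTalgdef
  have hKLsymm : ∀ k : K, σL.symm (algebraMap K L k) = algebraMap K L (σK.symm k) := by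
    intro k
    apply σL.injective
    rw [σL.apply_symm_apply, hKL, σK.apply_symm_apply]
  have hVmem : ∀ i j, Vv i j ∈ Talg := fun i j => Algebra.subset_adjoin (Or.inl ⟨(i, j), rfl⟩)
  have hVimem : ∀ i j, Vi i j ∈ Talg := fun i j => Algebra.subset_adjoin (Or.inr ⟨(i, j), rfl⟩)
  have hmemσ : ∀ w ∈ Talg, σL w ∈ Talg := by
    intro w hw
    refine Algebra.adjoin_induction (p := fun x _ => σL x ∈ Talg)
      (fun x hx => ?_) (fun r => ?_) (fun a b _ _ ha hb => ?_) (fun a b _ _ ha hb => ?_) hw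
    · rcases hx with ⟨p, rfl⟩ | ⟨p, rfl⟩
      · have h1 : σL (Vv p.1 p.2) = (AL * Vv) p.1 p.2 := by rw [← hVσ]; rfl
        rw [h1, Matrix.mul_apply]
        refine Subalgebra.sum_mem _ fun k _ => mul_mem ?_ (hVmem k p.2)
        exact Talg.algebraMap_mem (A.val p.1 k)
      · have h1 : σL (Vi p.1 p.2) = (Vi * ALi) p.1 p.2 := by rw [← hViσ]; rfl
        rw [h1, Matrix.mul_apply]
        refine Subalgebra.sum_mem _ fun k _ => mul_mem (hVimem p.1 k) ?_
        exact Talg.algebraMap_mem ((↑A⁻¹ : Matrix (Fin n) (Fin n) K) k p.2)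
    · show σL (algebraMap K L r) ∈ Talg
      rw [hKL]; exact Talg.algebraMap_mem _
    · show σL (a + b) ∈ Talg
      rw [map_add]; exact add_mem ha hb
    · show σL (a * b) ∈ Talg
      rw [map_mul]; exact mul_mem ha hb
  have hmemσsymm : ∀ w ∈ Talg, σL.symm w ∈ Talg := by
    intro w hw
    refine Algebra.adjoin_induction (p := fun x _ => σL.symm x ∈ Talg)
      (fun x hx => ?_) (fun r => ?_) (fun a b _ _ ha hb => ?_) (fun a b _ _ ha hb => ?_) hw
    · rcases hx with ⟨p, rfl⟩ | ⟨p, rfl⟩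
      · have h1 : σL.symm (Vv p.1 p.2) = (Q' * Vv) p.1 p.2 := by rw [← hVσsymm]; rfl
        rw [h1, Matrix.mul_apply]
        refine Subalgebra.sum_mem _ fun k _ => mul_mem ?_ (hVmem k p.2)
        have h2 : Q' p.1 k = algebraMap K L (σK.symm ((↑A⁻¹ : Matrix (Fin n) (Fin n) K) p.1 k)) := by
          rw [hQ', hALidef]
          exact hKLsymm _
        rw [h2]
        exact Talg.algebraMap_mem _
      · have h1 : σL.symm (Vi p.1 p.2) = (Vi * P') p.1 p.2 := by rw [← hViσsymm]; rfl
        rw [h1, Matrix.mul_apply]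
        refine Subalgebra.sum_mem _ fun k _ => mul_mem (hVimem p.1 k) ?_
        have h2 : P' k p.2 = algebraMap K L (σK.symm (A.val k p.2)) := by
          rw [hP', hALdef]
          exact hKLsymm _
        rw [h2]
        exact Talg.algebraMap_mem _
    · show σL.symm (algebraMap K L r) ∈ Talg
      rw [hKLsymm]; exact Talg.algebraMap_mem _
    · show σL.symm (a + b) ∈ Talg
      rw [map_add]; exact add_mem ha hb
    · show σL.symm (a * b) ∈ Talg
      rw [map_mul]; exact mul_mem ha hb
  -- the difference structure on T
  set σT : Talg ≃+* Talg :=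
    { toFun := fun t => ⟨σL t, hmemσ t t.2⟩
      invFun := fun t => ⟨σL.symm t, hmemσsymm t t.2⟩
      left_inv := fun t => Subtype.ext (σL.symm_apply_apply t)
      right_inv := fun t => Subtype.ext (σL.apply_symm_apply t)
      map_mul' := fun a b => Subtype.ext (map_mul σL a.1 b.1)
      map_add' := fun a b => Subtype.ext (map_add σL a.1 b.1) } with hσTdef
  refine ⟨σT, fun t => rfl, ?_⟩
  -- algebra equivalence versions over C
  have hfixTalg : ∀ c : C, σT (algebraMap C Talg c) = algebraMap C Talg c := by
    intro c
    apply Subtype.ext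
    show σL ((algebraMap C Talg c : Talg) : L) = ((algebraMap C Talg c : Talg) : L)
    have hcoe : ((algebraMap C Talg c : Talg) : L) = algebraMap C L c := rfl
    rw [hcoe, hfixL]
  set σSalg : S ≃ₐ[C] S := AlgEquiv.ofRingEquiv (f := σS) hfixS with hσSalg
  set σTalg : Talg ≃ₐ[C] Talg := AlgEquiv.ofRingEquiv (f := σT) hfixTalg with hσTalg
  set σS2 : S ⊗[C] Cb ≃+* S ⊗[C] Cb :=
    (Algebra.TensorProduct.congr σSalg (AlgEquiv.refl (R := C) (A₁ := Cb))).toRingEquiv with hσS2def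
  set σT2 : Talg ⊗[C] Cb ≃+* Talg ⊗[C] Cb :=
    (Algebra.TensorProduct.congr σTalg (AlgEquiv.refl (R := C) (A₁ := Cb))).toRingEquiv with hσT2def
  have hσS2 : ∀ (s : S) (c : Cb), σS2 (s ⊗ₜ[C] c) = σS s ⊗ₜ[C] c := by
    intro s c
    show Algebra.TensorProduct.congr σSalg (AlgEquiv.refl (R := C) (A₁ := Cb)) (s ⊗ₜ[C] c) = _
    rw [Algebra.TensorProduct.congr_apply, Algebra.TensorProduct.map_tmul]
    rfl
  have hσT2 : ∀ (t : Talg) (c : Cb), σT2 (t ⊗ₜ[C] c) = σT t ⊗ₜ[C] c := by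
    intro t c
    show Algebra.TensorProduct.congr σTalg (AlgEquiv.refl (R := C) (A₁ := Cb)) (t ⊗ₜ[C] c) = _
    rw [Algebra.TensorProduct.congr_apply, Algebra.TensorProduct.map_tmul]
    rfl
  -- nontriviality
  have hnontrivR2 : Nontrivial (L ⊗[C] Cb) := by
    obtain ⟨i⟩ := (Module.Basis.ofVectorSpace C Cb).index_nonempty
    exact nontrivial_of_ne ((Module.Basis.ofVectorSpace C Cb).baseChange L i) 0 (Module.Basis.ne_zero _ i)
  have hSnontriv : Nontrivial S := by
    refine nontrivial_of_ne 1 0 fun h => ?_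
    have h2 := congrArg ρ h
    rw [map_one, map_zero] at h2
    exact one_ne_zero h2
  -- the homomorphism φ : S ⊗ Cb → L ⊗ Cb
  set ρC : S →ₐ[C] L ⊗[C] Cb := ρ.restrictScalars C with hρCdef
  set incR : Cb →ₐ[C] L ⊗[C] Cb := Algebra.TensorProduct.includeRight with hincRdef
  set φ : S ⊗[C] Cb →ₐ[C] L ⊗[C] Cb := Algebra.TensorProduct.productMap ρC incR with hφdef
  have hφtmul : ∀ (s : S) (c : Cb), φ (s ⊗ₜ[C] c) = ρ s * ((1 : L) ⊗ₜ[C] c) := by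
    intro s c
    rw [hφdef, Algebra.TensorProduct.productMap_apply_tmul]
    rfl
  have hφσ : ∀ x, φ (σS2 x) = σ₂ (φ x) := by
    intro x
    induction x using TensorProduct.induction_on with
    | zero => rw [map_zero, map_zero, map_zero]
    | tmul s c =>
      rw [hσS2, hφtmul, hφtmul, hρσ, map_mul]
      congr 1
      rw [hσ₂, map_one]
    | add u v hu hv => simp only [map_add, hu, hv]
  have hφinj : Function.Injective φ := by
    have hstab : ∀ x ∈ RingHom.ker (φ : S ⊗[C] Cb →+* L ⊗[C] Cb),
        σS2 x ∈ RingHom.ker (φ : S ⊗[C] Cb →+* L ⊗[C] Cb) := by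
      intro x hx
      have hx' : φ x = 0 := hx
      have h2 : φ (σS2 x) = 0 := by rw [hφσ, hx', map_zero]
      exact h2
    rcases tensor_simple σS σS2 hσS2 hfixS hconstS hSsimple _ hstab with h | h
    · have := (RingHom.injective_iff_ker_eq_bot (φ : S ⊗[C] Cb →+* L ⊗[C] Cb)).mpr h
      exact this
    · exfalso
      have h1 : (1 : S ⊗[C] Cb) ∈ RingHom.ker (φ : S ⊗[C] Cb →+* L ⊗[C] Cb) := by
        rw [h]; trivial
      have h2 : φ (1 : S ⊗[C] Cb) = 0 := h1
      rw [map_one] at h2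
      exact one_ne_zero h2
  -- the homomorphism ι : T ⊗ Cb → L ⊗ Cb
  set TvalC : Talg →ₐ[C] L := Talg.val.restrictScalars C with hTvalCdef
  set ι : Talg ⊗[C] Cb →ₐ[C] L ⊗[C] Cb :=
    Algebra.TensorProduct.map TvalC (AlgHom.id C Cb) with hιdef
  have hιtmul : ∀ (t : Talg) (c : Cb), ι (t ⊗ₜ[C] c) = (t : L) ⊗ₜ[C] c := by
    intro t c
    rw [hιdef, Algebra.TensorProduct.map_tmul]
    rfl
  have hιinj : Function.Injective ι := by
    have hval : Function.Injective (TvalC.toLinearMap) := fun a b h => Subtype.ext h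
    have hlin := Module.Flat.rTensor_preserves_injective_linearMap (M := Cb)
      TvalC.toLinearMap hval
    intro a b hab
    apply hlin
    have hfun : ∀ x, LinearMap.rTensor Cb TvalC.toLinearMap x = ι x := by
      intro x
      induction x using TensorProduct.induction_on with
      | zero => rw [map_zero, map_zero]
      | tmul t c => rw [LinearMap.rTensor_tmul, hιtmul]; rfl
      | add u v hu hv => rw [map_add, map_add, hu, hv]
    rw [hfun, hfun]
    exact hab
  -- matrices over L ⊗ Cb
  set j2 : L →ₐ[C] L ⊗[C] Cb := Algebra.TensorProduct.includeLeft with hj2def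
  have hj2 : ∀ v : L, j2 v = v ⊗ₜ[C] (1 : Cb) := fun v => rfl
  have hj2alg : ∀ k : K, j2 (algebraMap K L k) = algebraMap K (L ⊗[C] Cb) k := by
    intro k
    rw [hj2, Algebra.TensorProduct.algebraMap_apply]
  have hρalg : ∀ k : K, ρ (algebraMap K S k) = algebraMap K (L ⊗[C] Cb) k :=
    fun k => ρ.commutes k
  set Mρ := U.val.map ⇑ρ with hMρdef
  set Mρi := (↑U⁻¹ : Matrix (Fin n) (Fin n) S).map ⇑ρ with hMρidef
  have hMρmul : Mρ * Mρi = 1 := matmap_mul_eq_one ρ U.mul_inv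
  have hMρmul' : Mρi * Mρ = 1 := matmap_mul_eq_one ρ U.inv_mul
  set MV := Vv.map ⇑j2 with hMVdef
  set MVi := Vi.map ⇑j2 with hMVidef
  have hMVmul : MV * MVi = 1 := matmap_mul_eq_one j2 hVVi
  have hMVmul' : MVi * MV = 1 := matmap_mul_eq_one j2 hViV
  set A2 := A.val.map (algebraMap K (L ⊗[C] Cb)) with hA2def
  set A2i := (↑A⁻¹ : Matrix (Fin n) (Fin n) K).map (algebraMap K (L ⊗[C] Cb)) with hA2idef
  have hA2mul : A2 * A2i = 1 := matmap_mul_eq_one _ A.mul_inv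
  have hA2mul' : A2i * A2 = 1 := matmap_mul_eq_one _ A.inv_mul
  have hMρσ : Mρ.map ⇑σ₂ = A2 * Mρ := by
    have h1 : Mρ.map ⇑σ₂ = (U.val.map ⇑σS).map ⇑ρ := by
      rw [hMρdef, Matrix.map_map, Matrix.map_map]
      exact matmap_congr _ fun s => (hρσ s).symm
    rw [h1, hU, matmap_mul (ρ : S →ₐ[K] L ⊗[C] Cb), hMρdef, hA2def]
    congr 1
    rw [Matrix.map_map]
    exact matmap_congr _ fun k => hρalg k
  have hMVσ : MV.map ⇑σ₂ = A2 * MV := by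
    have h1 : MV.map ⇑σ₂ = (Vv.map ⇑σL).map ⇑j2 := by
      rw [hMVdef, Matrix.map_map, Matrix.map_map]
      refine matmap_congr _ fun v => ?_
      show σ₂ (j2 v) = j2 (σL v)
      rw [hj2, hj2, hσ₂]
    rw [h1, hVσ, matmap_mul j2]
    have h3 : AL.map ⇑j2 = A2 := by
      rw [hALdef, hA2def, Matrix.map_map]
      exact matmap_congr _ fun k => hj2alg k
    rw [h3]
  have hMρiσ : Mρi.map ⇑σ₂ = Mρi * A2i := by
    refine mat_inv_unique (P := Mρ.map ⇑σ₂) (matmap_mul_eq_one σ₂ hMρmul) ?_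
    rw [hMρσ, ← Matrix.mul_assoc, Matrix.mul_assoc Mρi A2i A2, hA2mul', Matrix.mul_one, hMρmul']
  have hMViσ : MVi.map ⇑σ₂ = MVi * A2i := by
    refine mat_inv_unique (P := MV.map ⇑σ₂) (matmap_mul_eq_one σ₂ hMVmul) ?_
    rw [hMVσ, ← Matrix.mul_assoc, Matrix.mul_assoc MVi A2i A2, hA2mul', Matrix.mul_one, hMVmul']
  set W := Mρi * MV with hWdef
  set W' := MVi * Mρ with hW'def
  have hWσ : W.map ⇑σ₂ = W := by
    rw [hWdef, matmap_mul σ₂, hMρiσ, hMVσ, Matrix.mul_assoc, ← Matrix.mul_assoc A2i A2 MV,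
      hA2mul', Matrix.one_mul]
  have hW'σ : W'.map ⇑σ₂ = W' := by
    rw [hW'def, matmap_mul σ₂, hMViσ, hMρσ, Matrix.mul_assoc, ← Matrix.mul_assoc A2i A2 Mρ,
      hA2mul', Matrix.one_mul]
  have hWc : ∀ i j, W i j ∈ incR.range := by
    intro i j
    have hfix2 : σ₂ (W i j) = W i j := congrArg (fun M => M i j) hWσ
    obtain ⟨c, hc⟩ := constant_is_tmul σL σ₂ hσ₂ hfixL hconstL _ hfix2
    exact ⟨c, hc.symm⟩
  have hW'c : ∀ i j, W' i j ∈ incR.range := by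
    intro i j
    have hfix2 : σ₂ (W' i j) = W' i j := congrArg (fun M => M i j) hW'σ
    obtain ⟨c, hc⟩ := constant_is_tmul σL σ₂ hσ₂ hfixL hconstL _ hfix2
    exact ⟨c, hc.symm⟩
  -- matrix identities
  have hMV_eq : MV = Mρ * W := by
    rw [hWdef, ← Matrix.mul_assoc, hMρmul, Matrix.one_mul]
  have hMVi_eq : MVi = W' * Mρi := by
    rw [hW'def, Matrix.mul_assoc, hMρmul, Matrix.mul_one]
  have hMρ_eq : Mρ = MV * W' := by
    rw [hW'def, ← Matrix.mul_assoc, hMVmul, Matrix.one_mul]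
  have hMρi_eq : Mρi = W * MVi := by
    rw [hWdef, Matrix.mul_assoc, hMVmul, Matrix.mul_one]
  -- the two ranges agree
  set P1 : Subalgebra C (L ⊗[C] Cb) := ρC.range ⊔ incR.range with hP1def
  set P2 : Subalgebra C (L ⊗[C] Cb) := (j2.comp TvalC).range ⊔ incR.range with hP2def
  have h12 : P1 ≤ P2 := by
    rw [hP1def]
    refine sup_le ?_ le_sup_right
    intro w hw
    obtain ⟨s, rfl⟩ := hw
    show ρ s ∈ P2
    have hs : s ∈ Algebra.adjoin K
        (entries U.val ∪ entries (↑U⁻¹ : Matrix (Fin n) (Fin n) S)) := by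
      rw [hSgen]; trivial
    refine Algebra.adjoin_induction (p := fun x _ => ρ x ∈ P2)
      (fun x hx => ?_) (fun r => ?_) (fun a b _ _ ha hb => ?_) (fun a b _ _ ha hb => ?_) hs
    · rcases hx with ⟨p, rfl⟩ | ⟨p, rfl⟩
      · have h1 : ρ (U.val p.1 p.2) = (MV * W') p.1 p.2 := by rw [← hMρ_eq]; rfl
        rw [h1, Matrix.mul_apply]
        refine Subalgebra.sum_mem _ fun k _ => mul_mem ?_ ?_
        · have hm : MV p.1 k ∈ (j2.comp TvalC).range := ⟨⟨Vv p.1 k, hVmem _ _⟩, rfl⟩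
          exact (le_sup_left : (j2.comp TvalC).range ≤ P2) hm
        · exact (le_sup_right : incR.range ≤ P2) (hW'c k p.2)
      · have h1 : ρ ((↑U⁻¹ : Matrix (Fin n) (Fin n) S) p.1 p.2) = (W * MVi) p.1 p.2 := by
          rw [← hMρi_eq]; rfl
        rw [h1, Matrix.mul_apply]
        refine Subalgebra.sum_mem _ fun k _ => mul_mem ?_ ?_
        · exact (le_sup_right : incR.range ≤ P2) (hWc p.1 k)
        · have hm : MVi k p.2 ∈ (j2.comp TvalC).range := ⟨⟨Vi k p.2, hVimem _ _⟩, rfl⟩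
          exact (le_sup_left : (j2.comp TvalC).range ≤ P2) hm
    · show ρ (algebraMap K S r) ∈ P2
      have h1 : ρ (algebraMap K S r) = j2 (algebraMap K L r) := by rw [hρalg, hj2alg]
      rw [h1]
      have hm : j2 (algebraMap K L r) ∈ (j2.comp TvalC).range :=
        ⟨⟨algebraMap K L r, Talg.algebraMap_mem r⟩, rfl⟩
      exact (le_sup_left : (j2.comp TvalC).range ≤ P2) hm
    · show ρ (a + b) ∈ P2
      rw [map_add]; exact add_mem ha hb
    · show ρ (a * b) ∈ P2
      rw [map_mul]; exact mul_mem ha hb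
  have h21 : P2 ≤ P1 := by
    rw [hP2def]
    refine sup_le ?_ le_sup_right
    intro w hw
    obtain ⟨t, rfl⟩ := hw
    show j2 (t : L) ∈ P1
    have ht := t.2
    refine Algebra.adjoin_induction (p := fun x _ => j2 x ∈ P1)
      (fun x hx => ?_) (fun r => ?_) (fun a b _ _ ha hb => ?_) (fun a b _ _ ha hb => ?_) ht
    · rcases hx with ⟨p, rfl⟩ | ⟨p, rfl⟩
      · have h1 : j2 (Vv p.1 p.2) = (Mρ * W) p.1 p.2 := by rw [← hMV_eq]; rfl
        rw [h1, Matrix.mul_apply]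
        refine Subalgebra.sum_mem _ fun k _ => mul_mem ?_ ?_
        · exact (le_sup_left : ρC.range ≤ P1) ⟨U.val p.1 k, rfl⟩
        · exact (le_sup_right : incR.range ≤ P1) (hWc k p.2)
      · have h1 : j2 (Vi p.1 p.2) = (W' * Mρi) p.1 p.2 := by rw [← hMVi_eq]; rfl
        rw [h1, Matrix.mul_apply]
        refine Subalgebra.sum_mem _ fun k _ => mul_mem ?_ ?_
        · exact (le_sup_right : incR.range ≤ P1) (hW'c p.1 k)
        · exact (le_sup_left : ρC.range ≤ P1) ⟨(↑U⁻¹ : Matrix (Fin n) (Fin n) S) k p.2, rfl⟩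
    · show j2 (algebraMap K L r) ∈ P1
      have h1 : j2 (algebraMap K L r) = ρ (algebraMap K S r) := by rw [hρalg, hj2alg]
      rw [h1]
      exact (le_sup_left : ρC.range ≤ P1) ⟨algebraMap K S r, rfl⟩
    · show j2 (a + b) ∈ P1
      rw [map_add]; exact add_mem ha hb
    · show j2 (a * b) ∈ P1
      rw [map_mul]; exact mul_mem ha hb
  have hPeq : P1 = P2 := le_antisymm h12 h21
  have hφrange : φ.range = P1 := by
    rw [hφdef, Algebra.TensorProduct.productMap_range, hP1def]
  have hιrange : ι.range = P2 := by
    have hιeq : ι = Algebra.TensorProduct.productMap (j2.comp TvalC) incR := by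
      apply Algebra.TensorProduct.ext'
      intro t c
      rw [hιtmul, Algebra.TensorProduct.productMap_apply_tmul]
      show (t : L) ⊗ₜ[C] c = ((t : L) ⊗ₜ[C] (1 : Cb)) * ((1 : L) ⊗ₜ[C] c)
      rw [Algebra.TensorProduct.tmul_mul_tmul, mul_one, one_mul]
    rw [hιeq, Algebra.TensorProduct.productMap_range, hP2def]
  have hrange : φ.range = ι.range := by rw [hφrange, hιrange, hPeq]
  -- the isomorphism E
  set E0 : (S ⊗[C] Cb) ≃ₐ[C] (Talg ⊗[C] Cb) :=
    (AlgEquiv.ofInjective φ hφinj).trans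
      ((Subalgebra.equivOfEq _ _ hrange).trans (AlgEquiv.ofInjective ι hιinj).symm) with hE0def
  have hιE : ∀ x, ι (E0 x) = φ x := by
    intro x
    rw [hE0def]
    simp only [AlgEquiv.trans_apply]
    set y := Subalgebra.equivOfEq _ _ hrange (AlgEquiv.ofInjective φ hφinj x) with hydef
    have h1 : ι ((AlgEquiv.ofInjective ι hιinj).symm y) = ↑y := by
      conv_rhs => rw [← (AlgEquiv.ofInjective ι hιinj).apply_symm_apply y]
      rw [AlgEquiv.ofInjective_apply]
    rw [h1, hydef, Subalgebra.equivOfEq_apply, AlgEquiv.ofInjective_apply]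
  have hισT : ∀ y, ι (σT2 y) = σ₂ (ι y) := by
    intro y
    induction y using TensorProduct.induction_on with
    | zero => rw [map_zero, map_zero, map_zero]
    | tmul t c =>
      rw [hσT2, hιtmul, hιtmul, hσ₂]
      rfl
    | add u v hu hv => simp only [map_add, hu, hv]
  refine ⟨σS2, σT2, E0.toRingEquiv, hσS2, hσT2, ?_, ?_⟩
  · intro x
    apply hιinj
    show ι (E0 (σS2 x)) = ι (σT2 (E0 x))
    rw [hιE, hφσ, ← hιE, ← hισT]
  · intro s c
    show ι (E0 (s ⊗ₜ[C] c)) = ρ s * ((1 : L) ⊗ₜ[C] c)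
    rw [hιE, hφtmul]


end PV
end
end

section
/- Let K be a difference field of characteristic zero, A ∈ GL_n(K), and R = K[Z, 1/det(Z)] a weak Picard-Vessiot ring for σ(X) = AX over K (so Z ∈ GL_n(R), σ(Z) = AZ, and C_R = C_K). For every difference K-algebra automorphism φ of R, the matrix M_φ := Z^{-1}·φ(Z) (φ applied entrywise) has all entries in C_K and lies in GL_n(C_K), and the map φ ↦ M_φ is an injective group homomorphism from the group of difference K-algebra automorphisms of R into GL_n(C_K). -/
open scoped TensorProduct

noncomputable section

namespace PV

set_option synthInstance.maxHeartbeats 1000000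

/-- For a weak Picard-Vessiot ring `R = K[Z, 1/det Z]`, every difference
`K`-algebra automorphism `φ` gives a matrix `M_φ = Z⁻¹ · φ(Z)` with entries in `C_K`
lying in `GL_n(C_K)`, and `φ ↦ M_φ` is an injective group homomorphism into `GL_n(C_K)`. -/
theorem statement_4 {K : Type} [Field K] [CharZero K] (σK : K ≃+* K)
    {n : ℕ} (A : (Matrix (Fin n) (Fin n) K)ˣ)
    {R : Type} [CommRing R] [Algebra K R] (σR : R ≃+* R)
    (hcompat : DiffCompat σK σR) (hconst : ConstantsMatch σK σR)
    (Z : (Matrix (Fin n) (Fin n) R)ˣ) (hZ : FundMatrix σR A Z)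
    (hgen : Algebra.adjoin K
      (entries Z.val ∪ entries (↑Z⁻¹ : Matrix (Fin n) (Fin n) R)) = ⊤) :
    -- each M_φ has constant entries coming from C_K and lies in GL_n(C_K)
    (∀ φ : R ≃ₐ[K] R, (∀ r, φ (σR r) = σR (φ r)) →
      (∀ i j, σR (((↑Z⁻¹ : Matrix (Fin n) (Fin n) R) * Z.val.map ⇑φ) i j) =
        ((↑Z⁻¹ : Matrix (Fin n) (Fin n) R) * Z.val.map ⇑φ) i j) ∧
      ∃ N : (Matrix (Fin n) (Fin n) K)ˣ, (∀ i j, σK (N.val i j) = N.val i j) ∧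
        N.val.map (algebraMap K R) = (↑Z⁻¹ : Matrix (Fin n) (Fin n) R) * Z.val.map ⇑φ) ∧
    -- φ ↦ M_φ is multiplicative (a group homomorphism)
    (∀ φ ψ : R ≃ₐ[K] R, (∀ r, φ (σR r) = σR (φ r)) → (∀ r, ψ (σR r) = σR (ψ r)) →
      (↑Z⁻¹ : Matrix (Fin n) (Fin n) R) * Z.val.map (fun r => φ (ψ r)) =
        ((↑Z⁻¹ : Matrix (Fin n) (Fin n) R) * Z.val.map ⇑φ) *
          ((↑Z⁻¹ : Matrix (Fin n) (Fin n) R) * Z.val.map ⇑ψ)) ∧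
    -- φ ↦ M_φ is injective
    (∀ φ ψ : R ≃ₐ[K] R, (∀ r, φ (σR r) = σR (φ r)) → (∀ r, ψ (σR r) = σR (ψ r)) →
      (↑Z⁻¹ : Matrix (Fin n) (Fin n) R) * Z.val.map ⇑φ =
        (↑Z⁻¹ : Matrix (Fin n) (Fin n) R) * Z.val.map ⇑ψ → φ = ψ) := by
  classical
  -- entrywise map of σR is multiplicative on matrices
  have hσmul : ∀ X Y : Matrix (Fin n) (Fin n) R,
      (X * Y).map ⇑σR = X.map ⇑σR * Y.map ⇑σR := by
    intro X Y; ext i j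
    simp [Matrix.mul_apply, Matrix.map_apply, map_sum]
  have hfmul : ∀ X Y : Matrix (Fin n) (Fin n) K,
      (X * Y).map ⇑(algebraMap K R) = X.map ⇑(algebraMap K R) * Y.map ⇑(algebraMap K R) := by
    intro X Y; ext i j
    simp [Matrix.mul_apply, Matrix.map_apply, map_sum]
  have hfone : (1 : Matrix (Fin n) (Fin n) K).map ⇑(algebraMap K R) = 1 :=
    Matrix.map_one _ (map_zero _) (map_one _)
  have hφmulgen : ∀ (φ : R ≃ₐ[K] R) (X Y : Matrix (Fin n) (Fin n) R),
      (X * Y).map ⇑φ = X.map ⇑φ * Y.map ⇑φ := by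
    intro φ X Y; ext i j
    simp [Matrix.mul_apply, Matrix.map_apply, map_sum]
  have hφonegen : ∀ (φ : R ≃ₐ[K] R),
      (1 : Matrix (Fin n) (Fin n) R).map ⇑φ = 1 := fun φ =>
    Matrix.map_one _ (map_zero _) (map_one _)
  -- σR fixes M_φ entrywise (matrix form)
  have key : ∀ φ : R ≃ₐ[K] R, (∀ r, φ (σR r) = σR (φ r)) →
      ((↑Z⁻¹ : Matrix (Fin n) (Fin n) R) * Z.val.map ⇑φ).map ⇑σR
        = (↑Z⁻¹ : Matrix (Fin n) (Fin n) R) * Z.val.map ⇑φ := by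
    intro φ hφ
    have hZinvσ : (↑Z⁻¹ : Matrix (Fin n) (Fin n) R).map ⇑σR
        = (↑Z⁻¹ : Matrix (Fin n) (Fin n) R)
          * ((↑A⁻¹ : Matrix (Fin n) (Fin n) K).map ⇑(algebraMap K R)) := by
      refine left_inv_eq_right_inv (a := A.val.map ⇑(algebraMap K R) * Z.val) ?_ ?_
      · rw [← hZ, ← hσmul, show ((↑Z⁻¹ : Matrix (Fin n) (Fin n) R) * Z.val = 1) from Z.inv_mul]
        exact Matrix.map_one _ (map_zero _) (map_one _)
      · rw [mul_assoc, ← mul_assoc Z.val, Z.mul_inv, one_mul, ← hfmul, A.mul_inv, hfone]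
    have hZφσ : (Z.val.map ⇑φ).map ⇑σR
        = (A.val.map ⇑(algebraMap K R)) * Z.val.map ⇑φ := by
      have e1 : (Z.val.map ⇑φ).map ⇑σR = (Z.val.map ⇑σR).map ⇑φ := by
        ext i j
        simp only [Matrix.map_apply]
        exact (hφ _).symm
      rw [e1, hZ, hφmulgen]
      congr 1
      ext i j
      simp only [Matrix.map_apply]
      exact φ.commutes (A.val i j)
    calc ((↑Z⁻¹ : Matrix (Fin n) (Fin n) R) * Z.val.map ⇑φ).map ⇑σR
        = (↑Z⁻¹ : Matrix (Fin n) (Fin n) R).map ⇑σR * (Z.val.map ⇑φ).map ⇑σR := hσmul _ _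
      _ = ((↑Z⁻¹ : Matrix (Fin n) (Fin n) R)
            * ((↑A⁻¹ : Matrix (Fin n) (Fin n) K).map ⇑(algebraMap K R)))
          * ((A.val.map ⇑(algebraMap K R)) * Z.val.map ⇑φ) := by rw [hZinvσ, hZφσ]
      _ = (↑Z⁻¹ : Matrix (Fin n) (Fin n) R) * Z.val.map ⇑φ := by
          rw [mul_assoc, ← mul_assoc ((↑A⁻¹ : Matrix (Fin n) (Fin n) K).map ⇑(algebraMap K R)),
            ← hfmul, A.inv_mul, hfone, one_mul]
  -- Part 1
  have part1 : ∀ φ : R ≃ₐ[K] R, (∀ r, φ (σR r) = σR (φ r)) →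
      (∀ i j, σR (((↑Z⁻¹ : Matrix (Fin n) (Fin n) R) * Z.val.map ⇑φ) i j) =
        ((↑Z⁻¹ : Matrix (Fin n) (Fin n) R) * Z.val.map ⇑φ) i j) ∧
      ∃ N : (Matrix (Fin n) (Fin n) K)ˣ, (∀ i j, σK (N.val i j) = N.val i j) ∧
        N.val.map (algebraMap K R) = (↑Z⁻¹ : Matrix (Fin n) (Fin n) R) * Z.val.map ⇑φ := by
    intro φ hφ
    have hfix := key φ hφ
    have hent : ∀ i j, σR (((↑Z⁻¹ : Matrix (Fin n) (Fin n) R) * Z.val.map ⇑φ) i j) =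
        ((↑Z⁻¹ : Matrix (Fin n) (Fin n) R) * Z.val.map ⇑φ) i j := by
      intro i j
      have h := congrFun (congrFun hfix i) j
      simpa [Matrix.map_apply] using h
    refine ⟨hent, ?_⟩
    by_cases hR : Nontrivial R
    · choose c hc1 hc2 using fun i j => hconst _ (hent i j)
      have hmap : (Matrix.of c).map ⇑(algebraMap K R)
          = (↑Z⁻¹ : Matrix (Fin n) (Fin n) R) * Z.val.map ⇑φ := by
        ext i j; exact hc2 i j
      have hMunit : IsUnit ((↑Z⁻¹ : Matrix (Fin n) (Fin n) R) * Z.val.map ⇑φ) := by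
        refine IsUnit.mul (Z⁻¹).isUnit ?_
        have hu : IsUnit (φ Z.val.det) := (Z.isUnit.map (Matrix.detMonoidHom)).map φ
        rw [Matrix.isUnit_iff_isUnit_det]
        have hdet : (Z.val.map ⇑φ).det = φ Z.val.det :=
          (RingHom.map_det (φ : R →+* R) Z.val).symm
        rw [hdet]; exact hu
      have hdetR : IsUnit ((↑Z⁻¹ : Matrix (Fin n) (Fin n) R) * Z.val.map ⇑φ).det :=
        (Matrix.isUnit_iff_isUnit_det _).mp hMunit
      have hdetmap : algebraMap K R (Matrix.of c).det
          = ((↑Z⁻¹ : Matrix (Fin n) (Fin n) R) * Z.val.map ⇑φ).det :=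
        (RingHom.map_det (algebraMap K R) (Matrix.of c)).trans (congrArg Matrix.det hmap)
      have hN0det : (Matrix.of c).det ≠ 0 := by
        intro h0
        haveI := hR
        rw [h0, map_zero] at hdetmap
        exact hdetR.ne_zero hdetmap.symm
      have hNunit : IsUnit (Matrix.of c) :=
        (Matrix.isUnit_iff_isUnit_det _).mpr (Ne.isUnit hN0det)
      refine ⟨hNunit.unit, ?_, ?_⟩
      · intro i j
        simp only [IsUnit.unit_spec]
        exact hc1 i j
      · simp only [IsUnit.unit_spec]
        exact hmap
    · have hsub : Subsingleton R := not_nontrivial_iff_subsingleton.mp hR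
      refine ⟨1, ?_, ?_⟩
      · intro i j
        rcases eq_or_ne i j with h | h <;> simp [Matrix.one_apply, h]
      · ext i j
        exact Subsingleton.elim _ _
  refine ⟨part1, ?_, ?_⟩
  · -- multiplicativity
    intro φ ψ hφ hψ
    obtain ⟨N, hN1, hN2⟩ := (part1 ψ hψ).2
    have hfixM : ((↑Z⁻¹ : Matrix (Fin n) (Fin n) R) * Z.val.map ⇑ψ).map ⇑φ
        = (↑Z⁻¹ : Matrix (Fin n) (Fin n) R) * Z.val.map ⇑ψ := by
      rw [← hN2]
      ext i j
      simp only [Matrix.map_apply]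
      exact φ.commutes _
    have hcomp : Z.val.map (fun r => φ (ψ r)) = (Z.val.map ⇑ψ).map ⇑φ := by
      ext i j; rfl
    have hZψ : Z.val.map ⇑ψ
        = Z.val * ((↑Z⁻¹ : Matrix (Fin n) (Fin n) R) * Z.val.map ⇑ψ) := by
      rw [← mul_assoc, Z.mul_inv, one_mul]
    calc (↑Z⁻¹ : Matrix (Fin n) (Fin n) R) * Z.val.map (fun r => φ (ψ r))
        = (↑Z⁻¹ : Matrix (Fin n) (Fin n) R) * (Z.val.map ⇑ψ).map ⇑φ := by rw [hcomp]
      _ = (↑Z⁻¹ : Matrix (Fin n) (Fin n) R)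
            * ((Z.val * ((↑Z⁻¹ : Matrix (Fin n) (Fin n) R) * Z.val.map ⇑ψ)).map ⇑φ) := by
          rw [← hZψ]
      _ = (↑Z⁻¹ : Matrix (Fin n) (Fin n) R)
            * (Z.val.map ⇑φ * ((↑Z⁻¹ : Matrix (Fin n) (Fin n) R) * Z.val.map ⇑ψ)) := by
          rw [hφmulgen, hfixM]
      _ = ((↑Z⁻¹ : Matrix (Fin n) (Fin n) R) * Z.val.map ⇑φ)
            * ((↑Z⁻¹ : Matrix (Fin n) (Fin n) R) * Z.val.map ⇑ψ) := by rw [mul_assoc]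
  · -- injectivity
    intro φ ψ hφ hψ heq
    have hZeq : Z.val.map ⇑φ = Z.val.map ⇑ψ := by
      have h := congrArg (fun M => Z.val * M) heq
      simpa [← mul_assoc, Z.mul_inv] using h
    have h1 : Z.val.map ⇑ψ * (↑Z⁻¹ : Matrix (Fin n) (Fin n) R).map ⇑φ = 1 := by
      rw [← hZeq, ← hφmulgen, Z.mul_inv, hφonegen]
    have h2 : (↑Z⁻¹ : Matrix (Fin n) (Fin n) R).map ⇑ψ * Z.val.map ⇑ψ = 1 := by
      rw [← hφmulgen, show ((↑Z⁻¹ : Matrix (Fin n) (Fin n) R) * Z.val = 1) from Z.inv_mul,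
        hφonegen]
    have hZieq : (↑Z⁻¹ : Matrix (Fin n) (Fin n) R).map ⇑ψ
        = (↑Z⁻¹ : Matrix (Fin n) (Fin n) R).map ⇑φ :=
      left_inv_eq_right_inv h2 h1
    have hEq : ∀ x : R, φ x = ψ x := by
      have hsub : Algebra.adjoin K (entries Z.val ∪ entries (↑Z⁻¹ : Matrix (Fin n) (Fin n) R))
          ≤ AlgHom.equalizer (φ : R →ₐ[K] R) (ψ : R →ₐ[K] R) := by
        apply Algebra.adjoin_le
        rintro x (⟨⟨i, j⟩, rfl⟩ | ⟨⟨i, j⟩, rfl⟩)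
        · exact congrFun (congrFun hZeq i) j
        · exact congrFun (congrFun hZieq.symm i) j
      intro x
      have hx : x ∈ Algebra.adjoin K
          (entries Z.val ∪ entries (↑Z⁻¹ : Matrix (Fin n) (Fin n) R)) := by
        rw [hgen]; trivial
      exact hsub hx
    exact AlgEquiv.ext hEq

end PV
end
end

section
/- Let k be a difference field of characteristic zero, A ∈ GL_n(k), and R a Picard-Vessiot ring for σ(X) = AX over k with C_R = C_k. Let B be a commutative C_k-algebra, and equip R ⊗_{C_k} B with the automorphism σ(r ⊗ b) = σ(r) ⊗ b (so σ acts as the identity on B). Then every σ-invariant ideal N of R ⊗_{C_k} B is generated, as an ideal of R ⊗_{C_k} B, by N ∩ (1 ⊗ B). -/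
open scoped TensorProduct

noncomputable section

namespace PV

set_option synthInstance.maxHeartbeats 1000000
set_option maxHeartbeats 2000000

/-- (van der Put–Singer Lemma 1.11) Every σ-invariant ideal of `R ⊗_{C_k} B`
(with `σ = σ_R ⊗ id`) is generated by its intersection with `1 ⊗ B`. -/
theorem statement_5 {k : Type} [Field k] [CharZero k] (σk : k ≃+* k)
    {C : Type} [Field C] [Algebra C k]
    (hC : ∀ x : k, σk x = x ↔ x ∈ (algebraMap C k).range)
    {n : ℕ} (A : (Matrix (Fin n) (Fin n) k)ˣ)
    {R : Type} [CommRing R] [Algebra k R] (σR : R ≃+* R)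
    (hPV : IsPVRing σk σR A) (hconst : ConstantsMatch σk σR)
    [Algebra C R] [IsScalarTower C k R]
    {B : Type} [CommRing B] [Algebra C B]
    (σT : R ⊗[C] B ≃+* R ⊗[C] B)
    (hσT : ∀ (r : R) (b : B), σT (r ⊗ₜ[C] b) = σR r ⊗ₜ[C] b)
    (N : Ideal (R ⊗[C] B)) (hN : ∀ x ∈ N, σT x ∈ N) :
    N = Ideal.span {x | x ∈ N ∧ ∃ b : B, x = (1 : R) ⊗ₜ[C] b} := by
  classical
  have hSle : Ideal.span {x | x ∈ N ∧ ∃ b : B, x = (1 : R) ⊗ₜ[C] b} ≤ N :=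
    Ideal.span_le.mpr fun x hx => hx.1
  refine le_antisymm ?_ hSle
  rcases subsingleton_or_nontrivial (R ⊗[C] B) with h | h
  · intro x _
    rw [Subsingleton.elim x 0]; exact Submodule.zero_mem _
  have hRnt : Nontrivial R := by
    by_contra hns
    rw [not_nontrivial_iff_subsingleton] at hns
    exact one_ne_zero (α := R ⊗[C] B)
      (by rw [Algebra.TensorProduct.one_def, Subsingleton.elim (1 : R) 0,
        TensorProduct.zero_tmul])
  have hfixC : ∀ c : C, σR (algebraMap C R c) = algebraMap C R c := by
    intro c
    rw [IsScalarTower.algebraMap_apply C k R, hPV.1, (hC (algebraMap C k c)).mpr ⟨c, rfl⟩]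
  have hconst' : ∀ r : R, σR r = r → ∃ c : C, algebraMap C R c = r := by
    intro r hr
    obtain ⟨c, hc, hcr⟩ := hconst r hr
    obtain ⟨d, hd⟩ := (hC c).mp hc
    exact ⟨d, by rw [IsScalarTower.algebraMap_apply C k R, hd, hcr]⟩
  let J : Ideal B :=
    { carrier := {b | (1 : R) ⊗ₜ[C] b ∈ N}
      add_mem' := fun {a b} ha hb => by
        simp only [Set.mem_setOf_eq] at *
        rw [TensorProduct.tmul_add]; exact N.add_mem ha hb
      zero_mem' := by
        simp only [Set.mem_setOf_eq, TensorProduct.tmul_zero]; exact N.zero_mem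
      smul_mem' := fun c b hb => by
        simp only [Set.mem_setOf_eq, smul_eq_mul] at *
        have h1 : (1 : R) ⊗ₜ[C] (c * b) = ((1 : R) ⊗ₜ[C] c) * ((1 : R) ⊗ₜ[C] b) := by
          rw [Algebra.TensorProduct.tmul_mul_tmul, one_mul]
        rw [h1]; exact N.mul_mem_left _ hb }
  let J' : Submodule C B := Submodule.restrictScalars C J
  obtain ⟨W, hW⟩ := Submodule.exists_isCompl J'
  let projW : B →ₗ[C] W := W.projectionOnto J' hW.symm
  let projJ : B →ₗ[C] J' := J'.projectionOnto W hW
  let pW : R ⊗[C] B →ₗ[R] R ⊗[C] W := projW.baseChange R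
  let ιW : R ⊗[C] W →ₗ[R] R ⊗[C] B := (W.subtype).baseChange R
  let qJ : R ⊗[C] B →ₗ[R] R ⊗[C] B := (J'.subtype ∘ₗ projJ).baseChange R
  have hdecomp : ∀ t : R ⊗[C] B, qJ t + ιW (pW t) = t := by
    intro t
    have h1 : J'.subtype ∘ₗ projJ + W.subtype ∘ₗ projW = LinearMap.id := by
      apply LinearMap.ext; intro b
      exact Submodule.projection_add_projection_eq_self hW b
    have h2 : (W.subtype ∘ₗ projW).baseChange R = ιW ∘ₗ pW := LinearMap.baseChange_comp _ _
    calc qJ t + ιW (pW t)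
        = ((J'.subtype ∘ₗ projJ).baseChange R + (W.subtype ∘ₗ projW).baseChange R) t := by
          rw [LinearMap.add_apply, h2]; rfl
      _ = t := by rw [← LinearMap.baseChange_add, h1, LinearMap.baseChange_id]; rfl
  have hιWinj : Function.Injective ιW := by
    have hcomp : pW ∘ₗ ιW = LinearMap.id := by
      rw [← LinearMap.baseChange_comp]
      rw [Submodule.projectionOnto_comp_subtype, LinearMap.baseChange_id]
    intro a b hab
    have h3 := congrArg pW hab
    have h4 : ∀ u, pW (ιW u) = u := fun u => by
      have := LinearMap.ext_iff.mp hcomp u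
      simpa using this
    rwa [h4, h4] at h3
  have hqJspan : ∀ t : R ⊗[C] B,
      qJ t ∈ Ideal.span {x | x ∈ N ∧ ∃ b : B, x = (1 : R) ⊗ₜ[C] b} := by
    intro t
    induction t using TensorProduct.induction_on with
    | zero => rw [map_zero]; exact Submodule.zero_mem _
    | tmul r b =>
      have h1 : qJ (r ⊗ₜ[C] b) = r ⊗ₜ[C] ((projJ b : B)) := LinearMap.baseChange_tmul _ _ _
      have hmul : r ⊗ₜ[C] ((projJ b : B)) = (r ⊗ₜ[C] (1 : B)) * ((1 : R) ⊗ₜ[C] (projJ b : B)) := by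
        rw [Algebra.TensorProduct.tmul_mul_tmul, mul_one, one_mul]
      rw [h1, hmul]
      exact Ideal.mul_mem_left _ _ (Ideal.subset_span ⟨(projJ b).2, _, rfl⟩)
    | add a b ha hb => rw [map_add]; exact Submodule.add_mem _ ha hb
  let bW : Module.Basis (Module.Basis.ofVectorSpaceIndex C W) C W := Module.Basis.ofVectorSpace C W
  let ℬ : Module.Basis (Module.Basis.ofVectorSpaceIndex C W) R (R ⊗[C] W) := bW.baseChange R
  have hσrepr : ∀ t : R ⊗[C] B,
      ℬ.repr (pW (σT t)) = (ℬ.repr (pW t)).mapRange σR (map_zero σR) := by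
    intro t
    induction t using TensorProduct.induction_on with
    | zero =>
      simp
    | tmul r b =>
      rw [hσT r b]
      have h1 : pW ((σR r) ⊗ₜ[C] b) = (σR r) ⊗ₜ[C] projW b := LinearMap.baseChange_tmul _ _ _
      have h2 : pW (r ⊗ₜ[C] b) = r ⊗ₜ[C] projW b := LinearMap.baseChange_tmul _ _ _
      rw [h1, h2]
      ext i
      rw [Finsupp.mapRange_apply, Module.Basis.baseChange_repr_tmul, Module.Basis.baseChange_repr_tmul,
        Algebra.smul_def, Algebra.smul_def, map_mul, hfixC]
    | add a b ha hb =>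
      rw [map_add, map_add, map_add, map_add, ha, hb]
      ext i
      simp [Finsupp.mapRange_apply]
  have hkey : ∀ m : ℕ, ∀ x ∈ N, (ℬ.repr (pW x)).support.card ≤ m → pW x = 0 := by
    intro m
    induction m with
    | zero =>
      intro x _ hcard
      have he : (ℬ.repr (pW x)).support = ∅ := Finset.card_eq_zero.mp (Nat.le_zero.mp hcard)
      have h0 : ℬ.repr (pW x) = 0 := Finsupp.support_eq_empty.mp he
      have h1 := congrArg ℬ.repr.symm h0
      simpa using h1
    | succ m ih =>
      intro x hx hcard
      by_contra hne
      have hgne : ℬ.repr (pW x) ≠ 0 := fun hh =>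
        hne (by have h1 := congrArg ℬ.repr.symm hh; simpa using h1)
      obtain ⟨i₁, hi₁⟩ := Finsupp.support_nonempty_iff.mpr hgne
      set s := (ℬ.repr (pW x)).support with hs
      let I : Ideal R :=
        { carrier := {r | ∃ y, y ∈ N ∧ (ℬ.repr (pW y)).support ⊆ s ∧ ℬ.repr (pW y) i₁ = r}
          zero_mem' := ⟨0, N.zero_mem, by simp, by simp⟩
          add_mem' := by
            rintro a b ⟨y, hy, hys, hyi⟩ ⟨z, hz, hzs, hzi⟩
            refine ⟨y + z, N.add_mem hy hz, ?_, ?_⟩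
            · rw [map_add, map_add]
              exact Finsupp.support_add.trans (Finset.union_subset hys hzs)
            · rw [map_add, map_add, Finsupp.add_apply, hyi, hzi]
          smul_mem' := by
            rintro r' a ⟨y, hy, hys, hyi⟩
            refine ⟨r' • y, Submodule.smul_of_tower_mem N r' hy, ?_, ?_⟩
            · rw [map_smul, map_smul]
              exact Finsupp.support_smul.trans hys
            · rw [map_smul, map_smul, Finsupp.smul_apply, hyi, smul_eq_mul] }
      have hIσ : ∀ r ∈ I, σR r ∈ I := by
        rintro r ⟨y, hy, hys, hyi⟩
        exact ⟨σT y, hN y hy,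
          by rw [hσrepr]; exact Finsupp.support_mapRange.trans hys,
          by rw [hσrepr, Finsupp.mapRange_apply, hyi]⟩
      have hItop : I = ⊤ := by
        rcases hPV.2.1 I hIσ with hbot | htop
        · exfalso
          have hmem : ℬ.repr (pW x) i₁ ∈ I := ⟨x, hx, by rw [← hs], rfl⟩
          rw [hbot] at hmem
          exact (Finsupp.mem_support_iff.mp hi₁) ((Submodule.mem_bot R).mp hmem)
        · exact htop
      have h1I : (1 : R) ∈ I := by rw [hItop]; trivial
      obtain ⟨y, hyN, hys, hyi⟩ := h1I
      have hz : pW (σT y - y) = 0 := by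
        apply ih _ (N.sub_mem (hN y hyN) hyN)
        have hval : ∀ j, ℬ.repr (pW (σT y - y)) j = σR (ℬ.repr (pW y) j) - ℬ.repr (pW y) j := by
          intro j
          rw [map_sub, map_sub, Finsupp.sub_apply, hσrepr, Finsupp.mapRange_apply]
        have hsub : (ℬ.repr (pW (σT y - y))).support ⊆ s.erase i₁ := by
          intro j hj
          rw [Finsupp.mem_support_iff] at hj
          by_cases hji : j = i₁
          · exact absurd (by rw [hval, hji, hyi, map_one, sub_self]) hj
          · refine Finset.mem_erase.mpr ⟨hji, hys ?_⟩
            rw [Finsupp.mem_support_iff]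
            intro h0
            exact hj (by rw [hval, h0, map_zero, sub_zero])
        calc (ℬ.repr (pW (σT y - y))).support.card
            ≤ (s.erase i₁).card := Finset.card_le_card hsub
          _ = s.card - 1 := Finset.card_erase_of_mem hi₁
          _ ≤ m := by omega
      have hfixy : ∀ i, σR (ℬ.repr (pW y) i) = ℬ.repr (pW y) i := by
        intro i
        have h0 : ℬ.repr (pW (σT y - y)) i = 0 := by rw [hz, map_zero]; rfl
        rw [map_sub, map_sub, Finsupp.sub_apply, hσrepr, Finsupp.mapRange_apply] at h0
        exact sub_eq_zero.mp h0
      choose d hd using fun i => hconst' (ℬ.repr (pW y) i) (hfixy i)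
      set b0 : B := ∑ i ∈ (ℬ.repr (pW y)).support, (d i) • ((bW i : W) : B) with hb0
      have hb0W : b0 ∈ W := Submodule.sum_mem _ fun i _ => Submodule.smul_mem _ _ (bW i).2
      have hιWy : ιW (pW y) = (1 : R) ⊗ₜ[C] b0 := by
        have hy' : pW y = ∑ i ∈ (ℬ.repr (pW y)).support, ℬ.repr (pW y) i • ℬ i := by
          conv_lhs => rw [← ℬ.linearCombination_repr (pW y)]
          rw [Finsupp.linearCombination_apply, Finsupp.sum]
        rw [hy', map_sum, hb0, TensorProduct.tmul_sum]
        refine Finset.sum_congr rfl fun i _ => ?_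
        rw [map_smul, Module.Basis.baseChange_apply]
        have h3 : ιW ((1 : R) ⊗ₜ[C] (bW i)) = (1 : R) ⊗ₜ[C] ((bW i : W) : B) :=
          LinearMap.baseChange_tmul _ _ _
        rw [h3, ← hd i, Algebra.algebraMap_eq_smul_one, TensorProduct.smul_tmul',
          smul_eq_mul, mul_one]
        exact TensorProduct.smul_tmul _ _ _
      have hmemN : (1 : R) ⊗ₜ[C] b0 ∈ N := by
        rw [← hιWy]
        have h4 : ιW (pW y) = y - qJ y := eq_sub_of_add_eq' (hdecomp y)
        rw [h4]
        exact N.sub_mem hyN (hSle (hqJspan y))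
      have hb0J : b0 ∈ J' := hmemN
      have hb00 : b0 = 0 := by
        have h5 : b0 ∈ J' ⊓ W := ⟨hb0J, hb0W⟩
        rw [hW.inf_eq_bot] at h5
        exact h5
      have hpWy : pW y = 0 := hιWinj (by rw [hιWy, hb00, TensorProduct.tmul_zero, map_zero])
      have h6 : (1 : R) = 0 := by rw [← hyi, hpWy, map_zero]; rfl
      exact one_ne_zero h6
  intro x hx
  have h0 : pW x = 0 := hkey _ x hx le_rfl
  have h1 := hdecomp x
  rw [h0, map_zero, add_zero] at h1
  rw [← h1]
  exact hqJspan x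


end PV
end
end

section
/- Let L be a difference field of characteristic zero with constants C_L, let Y = (Y_{ij}) be an n×n matrix of indeterminates, and extend σ to L[Y, 1/det(Y)] by σ(Y_{ij}) = Y_{ij}. Then the map I ↦ I·L[Y, 1/det(Y)] is a bijection from the set of ideals of C_L[Y, 1/det(Y)] onto the set of σ-invariant ideals of L[Y, 1/det(Y)]. Concretely: (i) for every ideal I of C_L[Y, 1/det(Y)] one has (I·L[Y, 1/det(Y)]) ∩ C_L[Y, 1/det(Y)] = I, and (ii) every σ-invariant ideal J of L[Y, 1/det(Y)] is generated, as an ideal, by J ∩ C_L[Y, 1/det(Y)]. -/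
open scoped TensorProduct

noncomputable section

namespace PV

set_option synthInstance.maxHeartbeats 1000000

/-! Auxiliary machinery for statement 6 -/

section S6aux

open MvPolynomial

variable {L : Type} [Field L] (σL : L ≃+* L) {n : ℕ}

/-- coefficient-wise action of `σL` on polynomials -/
def sA (σL : L ≃+* L) (n : ℕ) :
    MvPolynomial (Fin n × Fin n) L →+* MvPolynomial (Fin n × Fin n) L :=
  MvPolynomial.map (σL : L →+* L)

lemma sA_coeff (q : MvPolynomial (Fin n × Fin n) L) (m) :
    coeff m (sA σL n q) = σL (coeff m q) := coeff_map _ _ _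

lemma sA_det : sA σL n (genMat L n).det = (genMat L n).det := by
  rw [RingHom.map_det]; congr 1; ext i j; simp [genMat, sA]

/-! ### A basis of `L` over its constants containing `1`, and coefficient projections -/

lemma li_one : LinearIndepOn ↥(constantsF σL)
    id ({1} : Set L) := (linearIndepOn_singleton_iff _).mpr one_ne_zero

/-- the basis of `L` over the constants extending `{1}` -/
noncomputable def bas : Module.Basis ↥((li_one σL).extend (Set.subset_univ _)) ↥(constantsF σL) L :=
  Module.Basis.extend (li_one σL)

def e0 : ↥((li_one σL).extend (Set.subset_univ _)) :=
  ⟨1, (li_one σL).subset_extend _ rfl⟩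

/-- projection onto the coefficient of `1` -/
noncomputable def cone (x : L) : L := ((bas σL).repr x (e0 σL) : L)

lemma cone_fixed (x : L) : σL (cone σL x) = cone σL x :=
  ((bas σL).repr x (e0 σL)).2

lemma cone_add (x y : L) : cone σL (x + y) = cone σL x + cone σL y := by
  simp [cone, map_add]

lemma cone_zero : cone σL 0 = 0 := by simp [cone]

lemma smul_constantsF (c : ↥(constantsF σL)) (x : L) : c • x = (c : L) * x := rfl

lemma cone_mul_const {c : L} (hc : σL c = c) (x : L) :
    cone σL (c * x) = c * cone σL x := by
  have : c * x = (⟨c, hc⟩ : ↥(constantsF σL)) • x := rfl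
  rw [cone, this, map_smul, Finsupp.smul_apply]
  rfl

lemma cone_const {c : L} (hc : σL c = c) : cone σL c = c := by
  have h1 : (bas σL) (e0 σL) = 1 := Module.Basis.extend_apply_self _ _
  have h2 : c = (⟨c, hc⟩ : ↥(constantsF σL)) • ((bas σL) (e0 σL)) := by
    rw [h1, smul_constantsF, mul_one]
  rw [cone]
  conv_lhs => rw [h2]
  rw [map_smul, Finsupp.smul_apply, Module.Basis.repr_self, Finsupp.single_eq_same]
  show ((⟨c, hc⟩ * 1 : ↥(constantsF σL)) : L) = c
  rw [mul_one]

/-- `cone` as an additive monoid hom -/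
noncomputable def coneHom : L →+ L := AddMonoidHom.mk' (cone σL) (cone_add σL)

/-- projection of a polynomial onto its "coefficient-of-1" part -/
noncomputable def pone (p : MvPolynomial (Fin n × Fin n) L) : MvPolynomial (Fin n × Fin n) L :=
  ∑ m ∈ p.support, monomial m (cone σL (coeff m p))

lemma pone_coeff (p : MvPolynomial (Fin n × Fin n) L) (m) :
    coeff m (pone σL p) = cone σL (coeff m p) := by
  classical
  rw [pone, coeff_sum]
  simp only [coeff_monomial]
  rw [Finset.sum_ite_eq' p.support m (fun m' => cone σL (coeff m' p))]
  by_cases h : m ∈ p.support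
  · rw [if_pos h]
  · rw [if_neg h, notMem_support_iff.mp h, cone_zero]

lemma pone_fixed (p : MvPolynomial (Fin n × Fin n) L) : sA σL n (pone σL p) = pone σL p := by
  apply MvPolynomial.ext
  intro m
  rw [sA_coeff, pone_coeff]
  exact cone_fixed σL _

lemma pone_of_fixed {q : MvPolynomial (Fin n × Fin n) L} (hq : sA σL n q = q) :
    pone σL q = q := by
  apply MvPolynomial.ext
  intro m
  rw [pone_coeff]
  apply cone_const
  conv_rhs => rw [← hq]
  rw [sA_coeff]

lemma pone_mul_fixed (p : MvPolynomial (Fin n × Fin n) L)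
    {u : MvPolynomial (Fin n × Fin n) L} (hu : sA σL n u = u) :
    pone σL (p * u) = pone σL p * u := by
  classical
  apply MvPolynomial.ext
  intro m
  rw [pone_coeff, coeff_mul, coeff_mul]
  rw [show (cone σL (∑ x ∈ Finset.HasAntidiagonal.antidiagonal m, coeff x.1 p * coeff x.2 u))
      = ∑ x ∈ Finset.HasAntidiagonal.antidiagonal m, cone σL (coeff x.1 p * coeff x.2 u) from
    map_sum (coneHom σL) _ _]
  apply Finset.sum_congr rfl
  intro x _
  have hcu : σL (coeff x.2 u) = coeff x.2 u := by
    conv_rhs => rw [← hu]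
    rw [sA_coeff]
  rw [pone_coeff, mul_comm (coeff x.1 p), cone_mul_const σL hcu, mul_comm]

lemma pone_sum {ι : Type*} (s : Finset ι) (f : ι → MvPolynomial (Fin n × Fin n) L) :
    pone σL (∑ i ∈ s, f i) = ∑ i ∈ s, pone σL (f i) := by
  classical
  apply MvPolynomial.ext
  intro m
  rw [pone_coeff, coeff_sum, coeff_sum]
  rw [show cone σL (∑ i ∈ s, coeff m (f i)) = ∑ i ∈ s, cone σL (coeff m (f i)) from
    map_sum (coneHom σL) _ _]
  exact Finset.sum_congr rfl fun i _ => (pone_coeff σL (f i) m).symm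

/-! ### Galois descent for σ-invariant subspaces of the polynomial ring -/

lemma descent (k : ℕ) : ∀ (S : Finset ((Fin n × Fin n) →₀ ℕ)), S.card ≤ k →
    ∀ (V : Submodule L (MvPolynomial (Fin n × Fin n) L)),
    (∀ q ∈ V, sA σL n q ∈ V) →
    (∀ q ∈ V, ∀ m, coeff m q ≠ 0 → m ∈ S) →
    ∀ p ∈ V, p ∈ Submodule.span L {q | q ∈ V ∧ sA σL n q = q} := by
  classical
  induction k with
  | zero =>
    intro S hS V hσ hsupp p hp
    have hS0 : S = ∅ := Finset.card_eq_zero.mp (Nat.le_zero.mp hS)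
    have : p = 0 := by
      apply MvPolynomial.ext
      intro m
      by_contra h
      have := hsupp p hp m h
      rw [hS0] at this
      exact absurd this (Finset.notMem_empty m)
    rw [this]
    exact Submodule.zero_mem _
  | succ k ih =>
    intro S hS V hσ hsupp p hp
    by_cases hz : ∀ v ∈ V, v = (0 : MvPolynomial (Fin n × Fin n) L)
    · rw [hz p hp]; exact Submodule.zero_mem _
    push_neg at hz
    obtain ⟨v₀, hv₀V, hv₀⟩ := hz
    have hP : ∃ j, ∃ v, v ∈ V ∧ v ≠ 0 ∧ v.support.card = j :=
      ⟨v₀.support.card, v₀, hv₀V, hv₀, rfl⟩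
    obtain ⟨v, hvV, hvne, hvcard⟩ := Nat.find_spec hP
    have hsupne : v.support.Nonempty := by
      rw [Finset.nonempty_iff_ne_empty, Ne, support_eq_empty]
      exact hvne
    obtain ⟨α, hα⟩ := hsupne
    have hcα : coeff α v ≠ 0 := mem_support_iff.mp hα
    set w : MvPolynomial (Fin n × Fin n) L := (coeff α v)⁻¹ • v with hw
    have hwV : w ∈ V := Submodule.smul_mem _ _ hvV
    have hwα : coeff α w = 1 := by
      rw [hw, coeff_smul, smul_eq_mul, inv_mul_cancel₀ hcα]
    have hwfix : sA σL n w = w := by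
      rw [← sub_eq_zero]
      by_contra hy
      have hyV : sA σL n w - w ∈ V := Submodule.sub_mem _ (hσ w hwV) hwV
      have hysupp : (sA σL n w - w).support ⊆ v.support.erase α := by
        intro m hm
        have hm' : coeff m (sA σL n w - w) ≠ 0 := mem_support_iff.mp hm
        rw [coeff_sub, sA_coeff] at hm'
        rw [Finset.mem_erase]
        constructor
        · rintro rfl
          rw [hwα] at hm'
          simp at hm'
        · rw [mem_support_iff]
          intro h0
          have : coeff m w = 0 := by rw [hw, coeff_smul, h0, smul_zero]
          rw [this, map_zero, sub_zero] at hm'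
          exact hm' rfl
      have hlt : (sA σL n w - w).support.card < Nat.find hP := by
        calc (sA σL n w - w).support.card ≤ (v.support.erase α).card :=
              Finset.card_le_card hysupp
          _ = v.support.card - 1 := Finset.card_erase_of_mem hα
          _ < v.support.card := by
              have : 0 < v.support.card := Finset.card_pos.mpr ⟨α, hα⟩
              omega
          _ = Nat.find hP := hvcard
      exact absurd (Nat.find_min' hP ⟨sA σL n w - w, hyV, hy, rfl⟩) (by omega)
    have hαS : α ∈ S := hsupp v hvV α hcα
    set V' : Submodule L (MvPolynomial (Fin n × Fin n) L) :=
      { carrier := {q | q ∈ V ∧ coeff α q = 0}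
        add_mem' := fun {a b} ha hb =>
          ⟨Submodule.add_mem _ ha.1 hb.1, by rw [coeff_add, ha.2, hb.2, add_zero]⟩
        zero_mem' := ⟨Submodule.zero_mem _, coeff_zero _⟩
        smul_mem' := fun c {q} hq =>
          ⟨Submodule.smul_mem _ _ hq.1, by rw [coeff_smul, hq.2, smul_zero]⟩ } with hV'
    have hσ' : ∀ q ∈ V', sA σL n q ∈ V' := by
      rintro q ⟨hqV, hqα⟩
      exact ⟨hσ q hqV, by rw [sA_coeff, hqα, map_zero]⟩
    have hsupp' : ∀ q ∈ V', ∀ m, coeff m q ≠ 0 → m ∈ S.erase α := by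
      rintro q ⟨hqV, hqα⟩ m hm
      rw [Finset.mem_erase]
      refine ⟨?_, hsupp q hqV m hm⟩
      rintro rfl
      exact hm hqα
    have hcard' : (S.erase α).card ≤ k := by
      rw [Finset.card_erase_of_mem hαS]
      omega
    have IH := ih (S.erase α) hcard' V' hσ' hsupp'
    have hmem : p - coeff α p • w ∈ V' := by
      refine ⟨Submodule.sub_mem _ hp (Submodule.smul_mem _ _ hwV), ?_⟩
      rw [coeff_sub, coeff_smul, hwα, smul_eq_mul, mul_one, sub_self]
    have h1 : p - coeff α p • w ∈
        Submodule.span L {q | q ∈ V ∧ sA σL n q = q} := by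
      have hsub : {q | q ∈ V' ∧ sA σL n q = q} ⊆ {q | q ∈ V ∧ sA σL n q = q} := by
        rintro q ⟨⟨hq1, _⟩, hq3⟩
        exact ⟨hq1, hq3⟩
      exact Submodule.span_mono hsub (IH _ hmem)
    have h2 : w ∈ Submodule.span L {q | q ∈ V ∧ sA σL n q = q} :=
      Submodule.subset_span ⟨hwV, hwfix⟩
    have : p = (p - coeff α p • w) + coeff α p • w := by ring
    rw [this]
    exact Submodule.add_mem _ h1 (Submodule.smul_mem _ _ h2)

/-! ### The difference ring `L[Y, 1/det Y]` -/

variable (σt : GenRing L n ≃+* GenRing L n)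
  (hcompat : ∀ x : L, σt (algebraMap L (GenRing L n) x) = algebraMap L (GenRing L n) (σL x))
  (hY : ∀ i j, σt (Yent L n i j) = Yent L n i j)

local notation "φ" => algebraMap (MvPolynomial (Fin n × Fin n) L) (GenRing L n)
local notation "dd" => Matrix.det (genMat L n)

lemma phi_C (c : L) : φ (C c) = algebraMap L (GenRing L n) c := by
  rw [IsScalarTower.algebraMap_apply L (MvPolynomial (Fin n × Fin n) L) (GenRing L n)]
  rfl

lemma phi_X (p : Fin n × Fin n) : φ (X p) = Yent L n p.1 p.2 := rfl

include hcompat hY in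
lemma phi_sA : ∀ q, σt (φ q) = φ (sA σL n q) := by
  intro q
  induction q using MvPolynomial.induction_on with
  | C c => rw [phi_C, hcompat, sA]; simp [phi_C]
  | add p q hp hq => rw [map_add, map_add, hp, hq, map_add, map_add]
  | mul_X p i hp =>
    rw [map_mul, map_mul, hp, phi_X]
    rw [hY, map_mul, map_mul]
    congr 1
    rw [sA]; simp
    exact (phi_X i).symm

lemma D_invDet : φ dd * invDet L n = 1 :=
  IsLocalization.Away.mul_invSelf _

include hcompat hY in
lemma sigma_D : σt (φ dd) = φ dd := by
  rw [phi_sA σL σt hcompat hY, sA_det]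

include hcompat hY in
lemma sigma_invDet : σt (invDet L n) = invDet L n := by
  have h1 : φ dd * σt (invDet L n) = 1 := by
    rw [← sigma_D σL σt hcompat hY, ← map_mul, D_invDet, map_one]
  calc σt (invDet L n) = σt (invDet L n) * (φ dd * invDet L n) := by rw [D_invDet, mul_one]
    _ = (φ dd * σt (invDet L n)) * invDet L n := by ring
    _ = invDet L n := by rw [h1, one_mul]

variable (S₀ : Subring (GenRing L n))
  (hS₀ : S₀ = Subring.closure
    ((⇑(algebraMap L (GenRing L n)) '' {x : L | σL x = x}) ∪
      (Set.range fun p : Fin n × Fin n => Yent L n p.1 p.2) ∪ {invDet L n}))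

include hcompat hY hS₀ in
lemma S0_fixed : ∀ s ∈ S₀, σt s = s := by
  have : S₀ ≤ constants σt := by
    rw [hS₀]
    apply Subring.closure_le.mpr
    rintro x (h | h)
    · rcases h with h | h
      · obtain ⟨c, hc, rfl⟩ := h
        show σt _ = _
        rw [hcompat, hc]
      · obtain ⟨p, rfl⟩ := h
        exact hY p.1 p.2
    · rcases h with rfl
      exact sigma_invDet σL σt hcompat hY
  exact fun s hs => this hs

include hS₀ in
lemma const_mem_S0 {c : L} (hc : σL c = c) : algebraMap L (GenRing L n) c ∈ S₀ := by
  rw [hS₀]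
  exact Subring.subset_closure (Or.inl (Or.inl ⟨c, hc, rfl⟩))

include hS₀ in
lemma Yent_mem_S0 (i j : Fin n) : Yent L n i j ∈ S₀ := by
  rw [hS₀]
  exact Subring.subset_closure (Or.inl (Or.inr ⟨(i, j), rfl⟩))

include hS₀ in
lemma invDet_mem_S0 : invDet L n ∈ S₀ := by
  rw [hS₀]
  exact Subring.subset_closure (Or.inr rfl)

include hS₀ in
lemma S1 : ∀ q : MvPolynomial (Fin n × Fin n) L, sA σL n q = q → φ q ∈ S₀ := by
  intro q hq
  rw [MvPolynomial.as_sum q, map_sum]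
  apply Subring.sum_mem
  intro v hv
  rw [monomial_eq, map_mul]
  apply Subring.mul_mem
  · rw [phi_C]
    apply const_mem_S0 σL S₀ hS₀
    conv_rhs => rw [← hq]
    rw [sA_coeff]
  · rw [Finsupp.prod, map_prod]
    apply Subring.prod_mem
    intro p hp
    rw [map_pow]
    exact Subring.pow_mem _ (Yent_mem_S0 σL S₀ hS₀ p.1 p.2) _

include hS₀ in
lemma S2 : ∀ s ∈ S₀, ∃ (k : ℕ) (q : MvPolynomial (Fin n × Fin n) L),
    sA σL n q = q ∧ s * (φ dd) ^ k = φ q := by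
  have key : S₀ ≤ {
      carrier := {s | ∃ (k : ℕ) (q : MvPolynomial (Fin n × Fin n) L),
        sA σL n q = q ∧ s * (φ dd) ^ k = φ q}
      one_mem' := ⟨0, 1, by simp, by simp⟩
      zero_mem' := ⟨0, 0, by simp, by simp⟩
      mul_mem' := by
        rintro a b ⟨k1, q1, hf1, h1⟩ ⟨k2, q2, hf2, h2⟩
        refine ⟨k1 + k2, q1 * q2, by rw [map_mul, hf1, hf2], ?_⟩
        rw [map_mul, ← h1, ← h2]; ring
      add_mem' := by
        rintro a b ⟨k1, q1, hf1, h1⟩ ⟨k2, q2, hf2, h2⟩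
        refine ⟨k1 + k2, q1 * dd ^ k2 + q2 * dd ^ k1, ?_, ?_⟩
        · rw [map_add, map_mul, map_mul, map_pow, map_pow, sA_det, hf1, hf2]
        · rw [map_add, map_mul, map_mul, map_pow, map_pow, ← h1, ← h2]; ring
      neg_mem' := by
        rintro a ⟨k1, q1, hf1, h1⟩
        exact ⟨k1, -q1, by rw [map_neg, hf1], by rw [map_neg, ← h1]; ring⟩ } := by
    rw [hS₀]
    apply Subring.closure_le.mpr
    rintro x (h | h)
    · rcases h with h | h
      · obtain ⟨c, hc, rfl⟩ := h
        exact ⟨0, C c, by rw [sA]; simp; exact hc, by rw [pow_zero, mul_one, phi_C]⟩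
      · obtain ⟨p, rfl⟩ := h
        exact ⟨0, X p, by rw [sA]; simp, by rw [pow_zero, mul_one, phi_X]⟩
    · rcases h with rfl
      exact ⟨1, 1, by simp,
        by rw [pow_one, map_one, mul_comm]; exact IsLocalization.Away.mul_invSelf _⟩
  exact fun s hs => key hs

/-! ### The three parts of the theorem -/

include hcompat hY hS₀ in
lemma part0 (I : Ideal S₀) : ∀ x ∈ Ideal.map S₀.subtype I, σt x ∈ Ideal.map S₀.subtype I := by
  intro x hx
  have h : Ideal.map S₀.subtype I ≤
      Ideal.comap (σt : GenRing L n →+* GenRing L n) (Ideal.map S₀.subtype I) := by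
    rw [Ideal.map_le_iff_le_comap]
    intro a ha
    have hfix : σt (S₀.subtype a) = S₀.subtype a := S0_fixed σL σt hcompat hY S₀ hS₀ _ a.2
    show σt (S₀.subtype a) ∈ Ideal.map S₀.subtype I
    rw [hfix]
    exact Ideal.mem_map_of_mem _ ha
  exact h hx

include hS₀ in
lemma partI (I : Ideal S₀) : (Ideal.map S₀.subtype I).comap S₀.subtype = I := by
  classical
  refine le_antisymm ?_ Ideal.le_comap_map
  intro x hx
  have hx' : (x : GenRing L n) ∈ Submodule.span (GenRing L n) (⇑S₀.subtype '' I) := hx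
  rw [Submodule.mem_span_set'] at hx'
  obtain ⟨r, cf, g, hsum⟩ := hx'
  choose z hz1 hz2 using fun i => (g i).2
  have hz2' : ∀ i, ((z i : GenRing L n)) = ((g i : GenRing L n)) := hz2
  -- clear denominators of the coefficients
  choose t ht using fun i => IsLocalization.surj (Submonoid.powers dd) (cf i)
  choose M hM using fun i => (t i).2.2
  set Mt := ∑ i, M i with hMt
  have hM_le : ∀ i, M i ≤ Mt :=
    fun i => Finset.single_le_sum (fun j _ => Nat.zero_le _) (Finset.mem_univ i)
  set f : Fin r → MvPolynomial (Fin n × Fin n) L :=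
    fun i => (t i).1 * dd ^ (Mt - M i) with hf
  have E : (x : GenRing L n) * (φ dd) ^ Mt = ∑ i, φ (f i) * ((z i : GenRing L n)) := by
    rw [← hsum, Finset.sum_mul]
    apply Finset.sum_congr rfl
    intro i _
    have h2 : (M i) + (Mt - M i) = Mt := by have := hM_le i; omega
    have hD : (φ dd) ^ Mt = (φ dd) ^ (M i) * (φ dd) ^ (Mt - M i) := by
      rw [← pow_add, h2]
    have hph : φ (t i).1 = cf i * (φ dd) ^ (M i) := by
      rw [← ht i]
      congr 1
      rw [← hM i, map_pow]
    rw [smul_eq_mul, ← hz2' i, hD, hf, map_mul, map_pow, hph]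
    ring
  choose kk qq hqfix hqeq using fun i => S2 σL S₀ hS₀ _ (z i).2
  obtain ⟨kx, qx, hqxfix, hqxeq⟩ := S2 σL S₀ hS₀ _ x.2
  set K := ∑ i, kk i with hK
  have hk_le : ∀ i, kk i ≤ K :=
    fun i => Finset.single_le_sum (fun j _ => Nat.zero_le _) (Finset.mem_univ i)
  have hqeq' : ∀ i, φ (qq i * dd ^ (K - kk i + kx))
      = (z i : GenRing L n) * (φ dd) ^ (K + kx) := by
    intro i
    rw [map_mul, map_pow, ← hqeq i, mul_assoc, ← pow_add]
    have h1 : kk i + (K - kk i + kx) = K + kx := by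
      have := hk_le i; omega
    rw [h1]
  have ER : φ (qx * dd ^ (Mt + K)) = φ (∑ i, f i * (qq i * dd ^ (K - kk i + kx))) := by
    have h1 : φ (qx * dd ^ (Mt + K))
        = ((x : GenRing L n) * (φ dd) ^ Mt) * (φ dd) ^ (K + kx) := by
      rw [map_mul, map_pow, ← hqxeq]; ring
    rw [h1, E, Finset.sum_mul, map_sum]
    apply Finset.sum_congr rfl
    intro i _
    have h4 : φ (f i * (qq i * dd ^ (K - kk i + kx)))
        = φ (f i) * ((z i : GenRing L n) * (φ dd) ^ (K + kx)) := by
      rw [map_mul, hqeq' i]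
    rw [h4]
    ring
  obtain ⟨ce, hce⟩ := (IsLocalization.eq_iff_exists (Submonoid.powers dd) (GenRing L n)).mp ER
  obtain ⟨kc, hkc⟩ := ce.2
  rw [← hkc] at hce
  have hLfix : sA σL n (dd ^ kc * (qx * dd ^ (Mt + K))) = dd ^ kc * (qx * dd ^ (Mt + K)) := by
    rw [map_mul, map_mul, map_pow, map_pow, sA_det, hqxfix]
  have hufix : ∀ i, sA σL n (qq i * dd ^ (K - kk i + kx) * dd ^ kc)
      = qq i * dd ^ (K - kk i + kx) * dd ^ kc := by
    intro i
    rw [map_mul, map_mul, map_pow, map_pow, sA_det, hqfix]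
  have EA : dd ^ kc * (qx * dd ^ (Mt + K))
      = ∑ i, pone σL (f i) * (qq i * dd ^ (K - kk i + kx) * dd ^ kc) := by
    calc dd ^ kc * (qx * dd ^ (Mt + K))
        = pone σL (dd ^ kc * (qx * dd ^ (Mt + K))) := (pone_of_fixed σL hLfix).symm
      _ = pone σL (∑ i, f i * (qq i * dd ^ (K - kk i + kx) * dd ^ kc)) := by
          rw [hce]
          congr 1
          rw [Finset.mul_sum]
          exact Finset.sum_congr rfl fun i _ => by ring
      _ = ∑ i, pone σL (f i) * (qq i * dd ^ (K - kk i + kx) * dd ^ kc) := by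
          rw [pone_sum]
          exact Finset.sum_congr rfl fun i _ => pone_mul_fixed σL (f i) (hufix i)
  have ERfin : (x : GenRing L n) * (φ dd) ^ (kc + kx + Mt + K)
      = ∑ i, φ (pone σL (f i)) * ((z i : GenRing L n) * (φ dd) ^ (K + kx + kc)) := by
    have h2 := congrArg (fun t => φ t) EA
    simp only [map_mul, map_pow, map_sum] at h2
    rw [← hqxeq] at h2
    calc (x : GenRing L n) * (φ dd) ^ (kc + kx + Mt + K)
        = (φ dd) ^ kc * ((x : GenRing L n) * (φ dd) ^ kx * (φ dd) ^ (Mt + K)) := by ring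
      _ = ∑ i, φ (pone σL (f i)) * (φ (qq i) * (φ dd) ^ (K - kk i + kx) * (φ dd) ^ kc) := h2
      _ = ∑ i, φ (pone σL (f i)) * ((z i : GenRing L n) * (φ dd) ^ (K + kx + kc)) := by
          apply Finset.sum_congr rfl
          intro i _
          have h3 : φ (qq i) * (φ dd) ^ (K - kk i + kx)
              = (z i : GenRing L n) * (φ dd) ^ (K + kx) := by
            have := hqeq' i
            rw [map_mul, map_pow] at this
            exact this
          rw [h3]
          ring
  -- lift back into `S₀`
  have hDmem : φ dd ∈ S₀ := S1 σL S₀ hS₀ dd (sA_det σL)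
  have hsSmem : ∀ i, φ (pone σL (f i)) ∈ S₀ :=
    fun i => S1 σL S₀ hS₀ _ (pone_fixed σL (f i))
  set dS : ↥S₀ := ⟨φ dd, hDmem⟩ with hdS
  set sS : Fin r → ↥S₀ := fun i => ⟨φ (pone σL (f i)), hsSmem i⟩ with hsS
  have hfin : x * dS ^ (kc + kx + Mt + K)
      = ∑ i, sS i * (z i * dS ^ (K + kx + kc)) := by
    apply Subtype.ext
    push_cast
    exact ERfin
  have hmemI : x * dS ^ (kc + kx + Mt + K) ∈ I := by
    rw [hfin]
    apply Ideal.sum_mem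
    intro i _
    exact Ideal.mul_mem_left _ _ (Ideal.mul_mem_right _ _ (hz1 i))
  set iS : ↥S₀ := ⟨invDet L n, invDet_mem_S0 σL S₀ hS₀⟩ with hiS
  have hdi : dS * iS = 1 := by
    apply Subtype.ext
    push_cast
    exact D_invDet
  have hxeq : x = (x * dS ^ (kc + kx + Mt + K)) * iS ^ (kc + kx + Mt + K) := by
    calc x = x * ((dS * iS) ^ (kc + kx + Mt + K)) := by rw [hdi, one_pow, mul_one]
      _ = (x * dS ^ (kc + kx + Mt + K)) * iS ^ (kc + kx + Mt + K) := by rw [mul_pow]; ring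
  rw [hxeq]
  exact Ideal.mul_mem_right _ _ hmemI

include hcompat hY hS₀ in
lemma partII (J : Ideal (GenRing L n)) (hJ : ∀ x ∈ J, σt x ∈ J) :
    J = Ideal.map S₀.subtype (J.comap S₀.subtype) := by
  classical
  refine le_antisymm ?_ (Ideal.map_le_iff_le_comap.mpr le_rfl)
  intro x hx
  obtain ⟨⟨p, s⟩, hsur⟩ := IsLocalization.surj (Submonoid.powers dd) x
  obtain ⟨kk, hkk⟩ := s.2
  rw [show ((s : MvPolynomial (Fin n × Fin n) L)) = dd ^ kk from hkk.symm, map_pow] at hsur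
  have hpJ : φ p ∈ J := by
    rw [← hsur]
    exact Ideal.mul_mem_right _ _ hx
  set V : Submodule L (MvPolynomial (Fin n × Fin n) L) :=
    { carrier := {q | φ q ∈ J ∧ ∀ m, coeff m q ≠ 0 → m ∈ p.support}
      add_mem' := fun {a b} ha hb => by
        refine ⟨by rw [map_add]; exact Ideal.add_mem _ ha.1 hb.1, ?_⟩
        intro m hm
        rw [coeff_add] at hm
        by_cases h1 : coeff m a ≠ 0
        · exact ha.2 m h1
        · push_neg at h1
          apply hb.2 m
          intro h2
          rw [h1, h2, add_zero] at hm
          exact hm rfl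
      zero_mem' := ⟨by rw [map_zero]; exact Ideal.zero_mem _, fun m hm => absurd (coeff_zero m) hm⟩
      smul_mem' := fun c {q} hq => by
        refine ⟨?_, ?_⟩
        · rw [smul_eq_C_mul, map_mul, phi_C]
          exact Ideal.mul_mem_left _ _ hq.1
        · intro m hm
          rw [coeff_smul] at hm
          apply hq.2 m
          intro h0
          rw [h0, smul_zero] at hm
          exact hm rfl } with hV
  have hσV : ∀ q ∈ V, sA σL n q ∈ V := by
    rintro q ⟨hq1, hq2⟩
    refine ⟨?_, ?_⟩
    · rw [← phi_sA σL σt hcompat hY]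
      exact hJ _ hq1
    · intro m hm
      rw [sA_coeff] at hm
      apply hq2 m
      intro h0
      rw [h0, map_zero] at hm
      exact hm rfl
  have hpV : p ∈ V := ⟨hpJ, fun m hm => mem_support_iff.mpr hm⟩
  have hdes := descent σL p.support.card p.support le_rfl V hσV (fun q hq => hq.2) p hpV
  have hspan : ∀ p' ∈ Submodule.span L {q | q ∈ V ∧ sA σL n q = q},
      φ p' ∈ Ideal.map S₀.subtype (J.comap S₀.subtype) := by
    intro p' hp'
    refine Submodule.span_induction (p := fun p' _ =>
      φ p' ∈ Ideal.map S₀.subtype (J.comap S₀.subtype)) ?_ ?_ ?_ ?_ hp'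
    · rintro q ⟨⟨hqJ, _⟩, hqfix⟩
      have hmem : φ q ∈ S₀ := S1 σL S₀ hS₀ q hqfix
      exact Ideal.mem_map_of_mem S₀.subtype
        (show (⟨φ q, hmem⟩ : ↥S₀) ∈ J.comap S₀.subtype from hqJ)
    · show φ (0 : MvPolynomial (Fin n × Fin n) L) ∈ Ideal.map S₀.subtype (J.comap S₀.subtype)
      rw [map_zero]; exact Ideal.zero_mem _
    · intro a b _ _ ha hb
      show φ (a + b) ∈ Ideal.map S₀.subtype (J.comap S₀.subtype)
      rw [map_add]
      exact Ideal.add_mem _ ha hb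
    · intro c q _ hq
      show φ (c • q) ∈ Ideal.map S₀.subtype (J.comap S₀.subtype)
      rw [smul_eq_C_mul, map_mul, phi_C]
      exact Ideal.mul_mem_left _ _ hq
  have hφp : φ p ∈ Ideal.map S₀.subtype (J.comap S₀.subtype) := hspan p hdes
  have hxe : x = φ p * (invDet L n) ^ kk := by
    calc x = x * ((φ dd * invDet L n) ^ kk) := by rw [D_invDet, one_pow, mul_one]
      _ = (x * (φ dd) ^ kk) * (invDet L n) ^ kk := by rw [mul_pow]; ring
      _ = φ p * (invDet L n) ^ kk := by rw [hsur]
  rw [hxe]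
  exact Ideal.mul_mem_right _ _ hφp

end S6aux

/-- For the difference ring `L[Y, 1/det Y]` with `σ(Y_{ij}) = Y_{ij}`, the map
`I ↦ I·L[Y, 1/det Y]` is a bijection from ideals of `C_L[Y, 1/det Y]` onto the σ-invariant
ideals of `L[Y, 1/det Y]`. -/
theorem statement_6 {L : Type} [Field L] [CharZero L] (σL : L ≃+* L) {n : ℕ}
    (σt : GenRing L n ≃+* GenRing L n)
    (hcompat : ∀ x : L, σt (algebraMap L (GenRing L n) x) = algebraMap L (GenRing L n) (σL x))
    (hY : ∀ i j, σt (Yent L n i j) = Yent L n i j)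
    -- S₀ is the subring C_L[Y, 1/det Y]
    (S₀ : Subring (GenRing L n))
    (hS₀ : S₀ = Subring.closure
      ((⇑(algebraMap L (GenRing L n)) '' {x : L | σL x = x}) ∪
        (Set.range fun p : Fin n × Fin n => Yent L n p.1 p.2) ∪ {invDet L n})) :
    -- extensions of ideals of S₀ are σ-invariant
    (∀ I : Ideal S₀, ∀ x ∈ Ideal.map S₀.subtype I, σt x ∈ Ideal.map S₀.subtype I) ∧
    -- (i): contraction of the extension gives back the ideal
    (∀ I : Ideal S₀, (Ideal.map S₀.subtype I).comap S₀.subtype = I) ∧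
    -- (ii): every σ-invariant ideal is generated by its contraction
    (∀ J : Ideal (GenRing L n), (∀ x ∈ J, σt x ∈ J) →
      J = Ideal.map S₀.subtype (J.comap S₀.subtype)) ∧
    -- bijectivity: every σ-invariant ideal is the extension of a unique ideal of S₀
    (∀ J : Ideal (GenRing L n), (∀ x ∈ J, σt x ∈ J) →
      ∃! I : Ideal S₀, Ideal.map S₀.subtype I = J) := by
  refine ⟨part0 σL σt hcompat hY S₀ hS₀, partI σL S₀ hS₀, partII σL σt hcompat hY S₀ hS₀, ?_⟩
  intro J hJ
  refine ⟨J.comap S₀.subtype, (partII σL σt hcompat hY S₀ hS₀ J hJ).symm, ?_⟩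
  intro I' hI'
  rw [← partI σL S₀ hS₀ I', hI']

end PV
end
end

section
/- Let K be a difference field of characteristic zero, A ∈ GL_n(K), R' a Picard-Vessiot ring for σ(X) = AX over K, and R* the total quotient ring of R' (the localization of R' at its set of nonzerodivisors), with σ extended canonically to R*. Then C_{R*} = C_{R'}: every element c of R* with σ(c) = c lies in (the canonical image of) R'. -/
open scoped TensorProduct

noncomputable section

namespace PV

set_option synthInstance.maxHeartbeats 1000000

/-- The constants of the total quotient ring of a Picard-Vessiot ring `R'`
are the constants of `R'`. -/
theorem statement_16 {K : Type} [Field K] [CharZero K] (σK : K ≃+* K)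
    {n : ℕ} (A : (Matrix (Fin n) (Fin n) K)ˣ)
    {R' : Type} [CommRing R'] [Algebra K R'] (σ' : R' ≃+* R')
    (hPV : IsPVRing σK σ' A)
    (σs : Localization (nonZeroDivisors R') ≃+* Localization (nonZeroDivisors R'))
    (hσs : ∀ x : R',
      σs (algebraMap R' (Localization (nonZeroDivisors R')) x) =
        algebraMap R' (Localization (nonZeroDivisors R')) (σ' x)) :
    ∀ c : Localization (nonZeroDivisors R'), σs c = c →
      ∃ r : R', σ' r = r ∧ algebraMap R' (Localization (nonZeroDivisors R')) r = c := by
  intro c hc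
  obtain ⟨hcompat, hsimple, _⟩ := hPV
  set f := algebraMap R' (Localization (nonZeroDivisors R')) with hf
  set I : Ideal R' :=
    { carrier := {r | ∃ a : R', f a = f r * c}
      zero_mem' := ⟨0, by simp⟩
      add_mem' := by
        rintro x y ⟨a, ha⟩ ⟨b, hb⟩
        exact ⟨a + b, by rw [map_add, map_add, ha, hb, add_mul]⟩
      smul_mem' := by
        rintro r x ⟨a, ha⟩
        exact ⟨r * a, by rw [smul_eq_mul, map_mul, map_mul, ha, mul_assoc]⟩ } with hI
  have hσI : ∀ x ∈ I, σ' x ∈ I := by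
    rintro x ⟨a, ha⟩
    refine ⟨σ' a, ?_⟩
    have h2 := congrArg σs ha
    rw [hσs, map_mul, hσs, hc] at h2
    exact h2
  rcases hsimple I hσI with hbot | htop
  · -- I = ⊥ forces R' to be trivial
    obtain ⟨⟨a, s⟩, hs⟩ := IsLocalization.surj (nonZeroDivisors R') c
    have hsI : (s : R') ∈ I := ⟨a, by rw [← hs, mul_comm]⟩
    rw [hbot] at hsI
    have hs0 : (s : R') = 0 := hsI
    have h10 : (1 : R') = 0 := by
      have := s.2
      rw [hs0] at this
      exact this.2 1 (mul_zero 1)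
    have hloc : (0 : Localization (nonZeroDivisors R')) = 1 := by
      rw [← map_one f, ← map_zero f, h10]
    haveI := subsingleton_of_zero_eq_one hloc
    exact ⟨0, by rw [h10.symm, map_one], Subsingleton.elim _ _⟩
  · -- I = ⊤ : c = f a for some a, and σ' a = a by injectivity
    have h1 : (1 : R') ∈ I := htop ▸ Submodule.mem_top
    obtain ⟨a, ha⟩ := h1
    rw [map_one, one_mul] at ha
    have hinj : Function.Injective f :=
      IsLocalization.injective (Localization (nonZeroDivisors R')) (le_refl (nonZeroDivisors R'))
    refine ⟨a, hinj ?_, ha⟩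
    rw [← hσs, ha, hc]

end PV
end
end

section
/- Let K be a difference field of characteristic zero, A ∈ GL_n(K), and R' a Picard-Vessiot ring for σ(X) = AX over K whose primitive idempotents e_0, …, e_{ℓ−1} are permuted cyclically by σ, with e_i = σ^i(e_0) and σ(e_{ℓ−1}) = e_0. Let R* be the total quotient ring of R' with σ extended canonically. Then Fix(σ^ℓ)(e_0R*) = e_0·C_{R'}: every element a ∈ e_0R* with σ^ℓ(a) = a lies in e_0·C_{R'}. -/
open scoped TensorProduct

noncomputable section

namespace PV

set_option synthInstance.maxHeartbeats 1000000

theorem iter_fixed_mod {α : Type*} (f : α → α) {ℓ : ℕ} {a : α}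
    (ha : f^[ℓ] a = a) (m : ℕ) : f^[m] a = f^[m % ℓ] a := by
  conv_lhs => rw [← Nat.mod_add_div m ℓ]
  rw [Function.iterate_add_apply, Function.iterate_mul, Function.iterate_fixed ha]

/-- With `e₀, …, e_{ℓ-1}` the primitive idempotents of a Picard-Vessiot ring
`R'`, permuted cyclically by `σ`, one has `Fix(σ^ℓ)(e₀R*) = e₀ · C_{R'}` inside the total
quotient ring `R*`. -/
theorem statement_17 {K : Type} [Field K] [CharZero K] (σK : K ≃+* K)
    {n : ℕ} (A : (Matrix (Fin n) (Fin n) K)ˣ)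
    {R' : Type} [CommRing R'] [Algebra K R'] (σ' : R' ≃+* R')
    (hPV : IsPVRing σK σ' A)
    {ℓ : ℕ} (hℓ : 0 < ℓ) (e : Fin ℓ → R') (he : IsDecomp σ' e)
    (σs : Localization (nonZeroDivisors R') ≃+* Localization (nonZeroDivisors R'))
    (hσs : ∀ x : R',
      σs (algebraMap R' (Localization (nonZeroDivisors R')) x) =
        algebraMap R' (Localization (nonZeroDivisors R')) (σ' x)) :
    ∀ a : Localization (nonZeroDivisors R'),
      algebraMap R' (Localization (nonZeroDivisors R')) (e ⟨0, hℓ⟩) * a = a →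
      (⇑σs)^[ℓ] a = a →
      ∃ c : R', σ' c = c ∧
        a = algebraMap R' (Localization (nonZeroDivisors R')) (e ⟨0, hℓ⟩ * c) := by
  intro a hea hfix
  obtain ⟨hidem, horth, hsumone, hprim, hcyc⟩ := he
  haveI : Nontrivial R' := nontrivial_of_ne (e ⟨0, hℓ⟩) 0 (hprim ⟨0, hℓ⟩).1
  set ι := algebraMap R' (Localization (nonZeroDivisors R')) with hι
  -- iterates of σs on the image of R'
  have hiter : ∀ (m : ℕ) (x : R'), (⇑σs)^[m] (ι x) = ι ((⇑σ')^[m] x) := by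
    intro m
    induction m with
    | zero => intro x; rfl
    | succ k ih =>
      intro x
      rw [Function.iterate_succ_apply, hσs, ih, Function.iterate_succ_apply]
  -- powers of σ' on e₀
  have hpow : ∀ j : ℕ, (⇑σ')^[j] (e ⟨0, hℓ⟩) = e ⟨j % ℓ, Nat.mod_lt _ hℓ⟩ := by
    intro j
    induction j with
    | zero =>
      simp only [Function.iterate_zero, id_eq]
      exact congrArg e (Fin.ext (Nat.zero_mod ℓ).symm)
    | succ k ih =>
      rw [Function.iterate_succ_apply', ih, hcyc]
      congr 1
      exact Fin.ext ((Nat.mod_modEq k ℓ).add_right 1)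
  set b := ∑ j ∈ Finset.range ℓ, (⇑σs)^[j] a with hb
  -- b is σs-invariant
  have hσb : σs b = b := by
    have h1 : σs b = ∑ j ∈ Finset.range ℓ, (⇑σs)^[j + 1] a := by
      rw [hb, map_sum]
      exact Finset.sum_congr rfl fun j _ => (Function.iterate_succ_apply' σs j a).symm
    have h2 := (Finset.sum_range_succ' (fun j => (⇑σs)^[j] a) ℓ).symm.trans
      (Finset.sum_range_succ (fun j => (⇑σs)^[j] a) ℓ)
    simp only [Function.iterate_zero, id_eq, hfix] at h2
    exact h1.trans (add_right_cancel h2)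
  -- the σ-ideal of denominators of b
  let I : Ideal R' :=
    { carrier := {r | ∃ s : R', ι r * b = ι s}
      zero_mem' := ⟨0, by simp⟩
      add_mem' := by
        rintro x y ⟨s, hs⟩ ⟨t, ht⟩
        exact ⟨s + t, by rw [map_add, add_mul, hs, ht, map_add]⟩
      smul_mem' := by
        rintro r x ⟨s, hs⟩
        exact ⟨r * s, by rw [smul_eq_mul, map_mul, mul_assoc, hs, map_mul]⟩ }
  have hIσ : ∀ x ∈ I, σ' x ∈ I := by
    rintro x ⟨s, hs⟩
    refine ⟨σ' s, ?_⟩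
    have h := congrArg σs hs
    rw [map_mul, hσs, hσs, hσb] at h
    exact h
  -- I is nonzero
  obtain ⟨⟨r, s⟩, hrs⟩ := IsLocalization.surj (nonZeroDivisors R') b
  have hsI : (s : R') ∈ I := ⟨r, by rw [mul_comm]; exact hrs⟩
  have hsne : (s : R') ≠ 0 := nonZeroDivisors.ne_zero s.2
  rcases hPV.2.1 I hIσ with hbot | htop
  · rw [hbot, Ideal.mem_bot] at hsI
    exact absurd hsI hsne
  -- so 1 ∈ I, hence b comes from R'
  have h1I : (1 : R') ∈ I := htop.symm ▸ Submodule.mem_top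
  obtain ⟨c, hc⟩ := h1I
  rw [map_one, one_mul] at hc
  have hinj : Function.Injective ι :=
    IsFractionRing.injective R' (Localization (nonZeroDivisors R'))
  have hcconst : σ' c = c := by
    apply hinj
    calc ι (σ' c) = σs (ι c) := (hσs c).symm
      _ = σs b := by rw [hc]
      _ = b := hσb
      _ = ι c := hc
  refine ⟨c, hcconst, ?_⟩
  -- a = e₀ * b
  have key : ι (e ⟨0, hℓ⟩) * b = a := by
    rw [hb, Finset.mul_sum]
    rw [Finset.sum_eq_single_of_mem (0 : ℕ) (Finset.mem_range.mpr hℓ)]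
    · simpa using hea
    · intro j hjmem hjne
      have hj : j < ℓ := Finset.mem_range.mp hjmem
      have hfin : (⟨j % ℓ, Nat.mod_lt _ hℓ⟩ : Fin ℓ) = ⟨j, hj⟩ :=
        Fin.ext (Nat.mod_eq_of_lt hj)
      have hterm : (⇑σs)^[j] a = ι (e ⟨j, hj⟩) * (⇑σs)^[j] a := by
        conv_lhs => rw [← hea, iter_mul σs j, hiter j, hpow j, hfin]
      rw [hterm, ← mul_assoc, ← map_mul,
        horth (Fin.ne_of_val_ne (by simpa using (Ne.symm hjne))), map_zero, zero_mul]
  rw [map_mul, ← hc, key]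

end PV
end
end
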